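/- arXiv:2503.10948 — 6 statements merged into one kernel-verified Lean document; each statement's English description precedes it below -/
import Mathlib

section
/- For the directed graph on ℕ where vertex i has one edge to 2i-2 (only if i ≥ 2), two edges to 2i-1, and one edge to 2i, the set of endpoints of paths of length n starting at vertex 1 is exactly {1, 2, ..., 2^n}, and for i > 1 the set of endpoints of paths of length n starting at i is exactly {2^n(i-2)+2, ..., 2^n i}. -/
/-- One directed step in the index graph: from `i` one can go to `2i-2`
(only when `i ≥ 2`), to `2i-1` (two parallel edges, irrelevant for reachability),
or to `2i`. -/
def IndexStep (i j : ℕ) : Prop :=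
  (2 ≤ i ∧ j = 2 * i - 2) ∨ j = 2 * i - 1 ∨ j = 2 * i

/-- `Reach n i j` : there is a directed path of length `n` from `i` to `j`. -/
def Reach : ℕ → ℕ → ℕ → Prop
  | 0, i, j => j = i
  | n + 1, i, j => ∃ k, IndexStep i k ∧ Reach n k j

theorem stmt0 (n : ℕ) :
    (∀ j : ℕ, Reach n 1 j ↔ 1 ≤ j ∧ j ≤ 2 ^ n) ∧
    (∀ i : ℕ, 1 < i → ∀ j : ℕ,
      Reach n i j ↔ 2 ^ n * (i - 2) + 2 ≤ j ∧ j ≤ 2 ^ n * i) := by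
  induction n with
  | zero =>
    simp only [Reach, pow_zero, one_mul]
    exact ⟨fun j => by omega, fun i hi j => by omega⟩
  | succ n ih =>
    obtain ⟨ih1, ih2⟩ := ih
    have hm : 1 ≤ 2 ^ n := Nat.one_le_two_pow
    constructor
    · intro j
      constructor
      · rintro ⟨k, hs, hr⟩
        have hk : k = 1 ∨ k = 2 := by unfold IndexStep at hs; omega
        have e5 : 2 ^ (n + 1) = 2 * 2 ^ n := by ring
        rcases hk with rfl | rfl
        · have := (ih1 j).mp hr; omega
        · have := (ih2 2 (by omega) j).mp hr
          simp only [Nat.sub_self, mul_zero] at this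
          omega
      · intro hj
        have e5 : 2 ^ (n + 1) = 2 * 2 ^ n := by ring
        by_cases h : j ≤ 2 ^ n
        · exact ⟨1, Or.inr (Or.inl rfl), (ih1 j).mpr ⟨hj.1, h⟩⟩
        · refine ⟨2, Or.inr (Or.inr rfl), (ih2 2 (by omega) j).mpr ?_⟩
          simp only [Nat.sub_self, mul_zero]
          omega
    · intro i hi j
      obtain ⟨d, rfl⟩ : ∃ d, i = d + 2 := ⟨i - 2, by omega⟩
      have e1 : 2 ^ n * (2 * d) = 2 * (2 ^ n * d) := by ring
      have e2 : 2 ^ n * (2 * d + 1) = 2 * (2 ^ n * d) + 2 ^ n := by ring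
      have e2' : 2 ^ n * (2 * d + 2) = 2 * (2 ^ n * d) + 2 * 2 ^ n := by ring
      have e3 : 2 ^ n * (2 * d + 3) = 2 * (2 ^ n * d) + 3 * 2 ^ n := by ring
      have e3' : 2 ^ n * (2 * d + 4) = 2 * (2 ^ n * d) + 4 * 2 ^ n := by ring
      have e4 : 2 ^ (n + 1) * d = 2 * (2 ^ n * d) := by ring
      have e5 : 2 ^ (n + 1) * (d + 2) = 2 * (2 ^ n * d) + 4 * 2 ^ n := by ring
      have hds : d + 2 - 2 = d := by omega
      rw [hds]
      constructor
      · rintro ⟨k, hs, hr⟩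
        have hk : k = 2 * d + 2 ∨ k = 2 * d + 3 ∨ k = 2 * d + 4 := by
          unfold IndexStep at hs; omega
        rcases hk with rfl | rfl | rfl
        · have := (ih2 (2 * d + 2) (by omega) j).mp hr
          rw [show 2 * d + 2 - 2 = 2 * d from by omega] at this
          omega
        · have := (ih2 (2 * d + 3) (by omega) j).mp hr
          rw [show 2 * d + 3 - 2 = 2 * d + 1 from by omega] at this
          omega
        · have := (ih2 (2 * d + 4) (by omega) j).mp hr
          rw [show 2 * d + 4 - 2 = 2 * d + 2 from by omega] at this
          omega
      · intro hj
        by_cases h1 : j ≤ 2 ^ n * (2 * d + 2)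
        · refine ⟨2 * d + 2, ?_, (ih2 (2 * d + 2) (by omega) j).mpr ?_⟩
          · unfold IndexStep; omega
          · rw [show 2 * d + 2 - 2 = 2 * d from by omega]; omega
        · by_cases h2 : j ≤ 2 ^ n * (2 * d + 3)
          · refine ⟨2 * d + 3, ?_, (ih2 (2 * d + 3) (by omega) j).mpr ?_⟩
            · unfold IndexStep; omega
            · rw [show 2 * d + 3 - 2 = 2 * d + 1 from by omega]; omega
          · refine ⟨2 * d + 4, ?_, (ih2 (2 * d + 4) (by omega) j).mpr ?_⟩
            · unfold IndexStep; omega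
            · rw [show 2 * d + 4 - 2 = 2 * d + 2 from by omega]; omega
end

section
/- Fix n ∈ ℕ and x ∈ V^(n) ∖ {0,1}, where V^(n) = {k/2^n : 0 ≤ k ≤ 2^n}, and let 1/2 < s < 1. Then the sums S_n(x) = ∑_{y ∈ V^(n), y ≠ x} |x - y|^{1-2s} μ^(n)(y) are nondecreasing in n (for n such that x ∈ V^(n)), and hence S_n(x) ≤ ∫_0^1 |x-y|^{1-2s} dy. -/
noncomputable def dyadicMu (n k : ℕ) : ℝ :=
  if k = 0 ∨ k = 2 ^ n then (1 / 2 : ℝ) ^ (n + 1) else (1 / 2 : ℝ) ^ n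

/-- `S5 s x n = ∑_{y ∈ V^(n), y ≠ x} |x - y|^{1-2s} μ^(n)(y)`. -/
noncomputable def S5 (s x : ℝ) (n : ℕ) : ℝ :=
  ∑ l ∈ (Finset.range (2 ^ n + 1)).filter (fun l : ℕ => ((l : ℝ) / 2 ^ n) ≠ x),
    |x - (l : ℝ) / 2 ^ n| ^ (1 - 2 * s) * dyadicMu n l

lemma dyadicMu_nonneg (n k : ℕ) : 0 ≤ dyadicMu n k := by
  unfold dyadicMu; split <;> positivity

lemma dyadicMu_le (n k : ℕ) : dyadicMu n k ≤ (1/2:ℝ)^n := by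
  unfold dyadicMu; split
  · rw [pow_succ]; nlinarith [pow_pos (by norm_num : (0:ℝ) < 1/2) n]
  · exact le_refl _

lemma dyadicMu_even (n l : ℕ) : dyadicMu (n+1) (2*l) = dyadicMu n l / 2 := by
  unfold dyadicMu
  have h : 2*l = 0 ∨ 2*l = 2^(n+1) ↔ l = 0 ∨ l = 2^n := by
    rw [pow_succ]; omega
  rw [if_congr h rfl rfl]
  split <;> ring

lemma dyadicMu_odd (n l : ℕ) : dyadicMu (n+1) (2*l+1) = (1/2:ℝ)^(n+1) := by
  unfold dyadicMu
  rw [if_neg]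
  rintro (h | h)
  · omega
  · have : 2 ∣ 2^(n+1) := dvd_pow_self 2 (Nat.succ_ne_zero n)
    omega

lemma S5_eq (s x : ℝ) (n k : ℕ) (hx : x = (k:ℝ)/2^n) :
    S5 s x n = ∑ l ∈ (Finset.range (2^n+1)).erase k,
      |x - (l:ℝ)/2^n| ^ (1-2*s) * dyadicMu n l := by
  unfold S5
  congr 1
  ext l
  simp only [Finset.mem_filter, Finset.mem_erase, Finset.mem_range, hx]
  have : ((l:ℝ)/2^n = (k:ℝ)/2^n) ↔ l = k := by
    rw [div_eq_div_iff (by positivity) (by positivity)]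
    constructor
    · intro h; exact_mod_cast mul_right_cancel₀ (by positivity) h
    · rintro rfl; rfl
  constructor
  · rintro ⟨h1, h2⟩; exact ⟨fun hh => h2 (this.mpr hh), h1⟩
  · rintro ⟨h1, h2⟩; exact ⟨h2, fun hh => h1 (this.mp hh)⟩

lemma S5_step (s x : ℝ) (hs : 1/2 < s) (n k : ℕ) (h0 : 0 < k) (h2 : k < 2^n)
    (hx : x = (k:ℝ)/2^n) : S5 s x n ≤ S5 s x (n+1) := by
  have hα : (1 - 2*s) < 0 := by linarith
  have hx2 : x = ((2*k:ℕ):ℝ)/2^(n+1) := by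
    rw [hx]; push_cast; rw [pow_succ]; field_simp
  rw [S5_eq s x n k hx, S5_eq s x (n+1) (2*k) hx2]
  set g : ℕ → ℝ := fun j => |x - (j:ℝ)/2^(n+1)| ^ (1-2*s) * dyadicMu (n+1) j with hg
  have hgnonneg : ∀ j, 0 ≤ g j := fun j =>
    mul_nonneg (Real.rpow_nonneg (abs_nonneg _) _) (dyadicMu_nonneg _ _)
  set E := ((Finset.range (2^n+1)).erase k).image (fun l => 2*l) with hE
  set O := (Finset.range (2^n)).image (fun l => 2*l+1) with hO
  have hEO : Disjoint E O := by
    simp only [Finset.disjoint_left, hE, hO, Finset.mem_image]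
    rintro a ⟨l, _, rfl⟩ ⟨m, _, hm⟩; omega
  have hsub : E ∪ O ⊆ (Finset.range (2^(n+1)+1)).erase (2*k) := by
    intro j hj
    have hpow : 2^(n+1) = 2*2^n := by rw [pow_succ]; ring
    rcases Finset.mem_union.mp hj with h | h
    · obtain ⟨l, hl, rfl⟩ := Finset.mem_image.mp h
      simp only [Finset.mem_erase, Finset.mem_range] at hl ⊢
      omega
    · obtain ⟨l, hl, rfl⟩ := Finset.mem_image.mp h
      simp only [Finset.mem_range] at hl
      simp only [Finset.mem_erase, Finset.mem_range]
      omega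
  have key : ∑ j ∈ E ∪ O, g j ≤ ∑ j ∈ (Finset.range (2^(n+1)+1)).erase (2*k), g j :=
    Finset.sum_le_sum_of_subset_of_nonneg hsub (fun j _ _ => hgnonneg j)
  refine le_trans ?_ key
  rw [Finset.sum_union hEO]
  have hEsum : ∑ j ∈ E, g j = ∑ l ∈ (Finset.range (2^n+1)).erase k,
      |x - (l:ℝ)/2^n| ^ (1-2*s) * (dyadicMu n l / 2) := by
    rw [hE, Finset.sum_image (fun a _ b _ h => by omega)]
    apply Finset.sum_congr rfl
    intro l _
    have hcast : ((2*l:ℕ):ℝ)/2^(n+1) = (l:ℝ)/2^n := by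
      push_cast; rw [pow_succ]; field_simp
    rw [hg]
    simp only
    rw [hcast, dyadicMu_even n l]
  rw [hEsum]
  -- reduce to comparing half-sum with odd part
  have hOsum : ∑ j ∈ O, g j = ∑ l ∈ Finset.range (2^n), g (2*l+1) := by
    rw [hO, Finset.sum_image (fun a _ b _ h => by omega)]
  have main : ∑ l ∈ (Finset.range (2^n+1)).erase k,
      |x - (l:ℝ)/2^n| ^ (1-2*s) * (dyadicMu n l / 2) ≤ ∑ j ∈ O, g j := by
    rw [hOsum]
    set ι : ℕ → ℕ := fun l => if l < k then l else l - 1 with hι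
    have step1 : ∑ l ∈ (Finset.range (2^n+1)).erase k,
        |x - (l:ℝ)/2^n| ^ (1-2*s) * (dyadicMu n l / 2)
        ≤ ∑ l ∈ (Finset.range (2^n+1)).erase k, g (2 * ι l + 1) := by
      apply Finset.sum_le_sum
      intro l hl
      simp only [Finset.mem_erase, Finset.mem_range] at hl
      have hln : l ≤ 2^n := by omega
      rw [hg]
      simp only
      rw [dyadicMu_odd]
      have hw : dyadicMu n l / 2 ≤ (1/2:ℝ)^(n+1) := by
        have := dyadicMu_le n l
        rw [pow_succ]
        linarith
      have hpow2 : (0:ℝ) < 2^n := by positivity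
      have hpow2' : (0:ℝ) < 2^(n+1) := by positivity
      have hrpow : |x - (l:ℝ)/2^n| ^ (1-2*s) ≤ |x - ((2*ι l+1:ℕ):ℝ)/2^(n+1)| ^ (1-2*s) := by
        apply Real.rpow_le_rpow_of_nonpos _ _ hα.le
        · -- 0 < |x - m|
          rcases lt_or_gt_of_ne hl.1 with hlk | hlk
          · have hι' : ι l = l := if_pos hlk
            have hc : (1:ℝ) ≤ (k:ℝ) - l := by
              have : ((l:ℝ)+1) ≤ k := by exact_mod_cast hlk
              linarith
            have e2 : x - ((2*ι l+1:ℕ):ℝ)/2^(n+1) = (2*((k:ℝ)-l)-1)/2^(n+1) := by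
              rw [hι', hx]; push_cast; rw [pow_succ]; field_simp; ring
            rw [e2, abs_of_pos (div_pos (by linarith) (by positivity))]
            exact div_pos (by linarith) (by positivity)
          · have hι' : ι l = l - 1 := if_neg (by omega)
            have h1l : 1 ≤ l := by omega
            have hc : (1:ℝ) ≤ (l:ℝ) - k := by
              have : ((k:ℝ)+1) ≤ l := by exact_mod_cast hlk
              linarith
            have e2 : x - ((2*ι l+1:ℕ):ℝ)/2^(n+1) = -((2*((l:ℝ)-k)-1)/2^(n+1)) := by
              rw [hι', hx]
              have : ((2*(l-1)+1:ℕ):ℝ) = 2*(l:ℝ) - 1 := by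
                push_cast [Nat.cast_sub h1l]; ring
              rw [this]; push_cast; rw [pow_succ]; field_simp; ring
            rw [e2, abs_neg, abs_of_pos (div_pos (by linarith) (by positivity))]
            exact div_pos (by linarith) (by positivity)
        · -- |x - m| ≤ |x - l/2^n|
          rcases lt_or_gt_of_ne hl.1 with hlk | hlk
          · have hι' : ι l = l := if_pos hlk
            have hc : (1:ℝ) ≤ (k:ℝ) - l := by
              have : ((l:ℝ)+1) ≤ k := by exact_mod_cast hlk
              linarith
            have e1 : x - (l:ℝ)/2^n = (2*((k:ℝ)-l))/2^(n+1) := by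
              rw [hx, pow_succ]; field_simp
            have e2 : x - ((2*ι l+1:ℕ):ℝ)/2^(n+1) = (2*((k:ℝ)-l)-1)/2^(n+1) := by
              rw [hι', hx]; push_cast; rw [pow_succ]; field_simp; ring
            rw [e1, e2, abs_of_pos (div_pos (by linarith) (by positivity)),
              abs_of_pos (div_pos (by linarith) (by positivity))]
            apply div_le_div_of_nonneg_right ?_ (by positivity)
            · linarith
          · have hι' : ι l = l - 1 := if_neg (by omega)
            have h1l : 1 ≤ l := by omega
            have hc : (1:ℝ) ≤ (l:ℝ) - k := by
              have : ((k:ℝ)+1) ≤ l := by exact_mod_cast hlk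
              linarith
            have e1 : x - (l:ℝ)/2^n = -((2*((l:ℝ)-k))/2^(n+1)) := by
              rw [hx, pow_succ]; field_simp; ring
            have e2 : x - ((2*ι l+1:ℕ):ℝ)/2^(n+1) = -((2*((l:ℝ)-k)-1)/2^(n+1)) := by
              rw [hι', hx]
              have : ((2*(l-1)+1:ℕ):ℝ) = 2*(l:ℝ) - 1 := by
                push_cast [Nat.cast_sub h1l]; ring
              rw [this]; push_cast; rw [pow_succ]; field_simp; ring
            rw [e1, e2, abs_neg, abs_neg, abs_of_pos (div_pos (by linarith) (by positivity)),
              abs_of_pos (div_pos (by linarith) (by positivity))]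
            apply div_le_div_of_nonneg_right ?_ (by positivity)
            · linarith
      calc |x - (l:ℝ)/2^n| ^ (1-2*s) * (dyadicMu n l / 2)
          ≤ |x - ((2*ι l+1:ℕ):ℝ)/2^(n+1)| ^ (1-2*s) * ((1/2:ℝ)^(n+1)) := by
            apply mul_le_mul hrpow hw _ (Real.rpow_nonneg (abs_nonneg _) _)
            have := dyadicMu_nonneg n l; linarith
        _ = _ := by push_cast; ring_nf
    refine le_trans step1 ?_
    have hinj : Set.InjOn ι (((Finset.range (2^n+1)).erase k) : Set ℕ) := by
      intro a ha b hb hab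
      simp only [Finset.coe_erase, Set.mem_diff, Finset.mem_coe, Finset.mem_range,
        Set.mem_singleton_iff] at ha hb
      simp only [hι] at hab
      split_ifs at hab <;> omega
    rw [← Finset.sum_image (f := fun j => g (2*j+1)) (g := ι)
      (fun a ha b hb h => hinj (by exact_mod_cast ha) (by exact_mod_cast hb) h)]
    apply Finset.sum_le_sum_of_subset_of_nonneg
    · intro j hj
      obtain ⟨l, hl, rfl⟩ := Finset.mem_image.mp hj
      simp only [Finset.mem_erase, Finset.mem_range] at hl
      simp only [Finset.mem_range, hι]
      split_ifs <;> omega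
    · intro j _ _; exact hgnonneg _
  calc ∑ l ∈ (Finset.range (2^n+1)).erase k, |x - (l:ℝ)/2^n| ^ (1-2*s) * dyadicMu n l
      = (∑ l ∈ (Finset.range (2^n+1)).erase k,
          |x - (l:ℝ)/2^n| ^ (1-2*s) * (dyadicMu n l / 2))
        + ∑ l ∈ (Finset.range (2^n+1)).erase k,
          |x - (l:ℝ)/2^n| ^ (1-2*s) * (dyadicMu n l / 2) := by
        rw [← Finset.sum_add_distrib]
        apply Finset.sum_congr rfl
        intro l _; ring
    _ ≤ _ := by
        apply add_le_add le_rfl main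

open MeasureTheory intervalIntegral in
lemma abs_rpow_intervalIntegrable {r : ℝ} (hr : -1 < r) (a b : ℝ) :
    IntervalIntegrable (fun t : ℝ => |t| ^ r) volume a b := by
  have base : ∀ c : ℝ, 0 ≤ c → IntervalIntegrable (fun t : ℝ => |t| ^ r) volume 0 c := by
    intro c hc
    have h1 : IntervalIntegrable (fun t : ℝ => t ^ r) volume 0 c :=
      intervalIntegrable_rpow' hr
    rw [intervalIntegrable_iff, Set.uIoc_of_le hc] at h1 ⊢
    apply h1.congr_fun ?_ measurableSet_Ioc
    intro t ht
    simp [abs_of_pos ht.1]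
  have all0 : ∀ c : ℝ, IntervalIntegrable (fun t : ℝ => |t| ^ r) volume 0 c := by
    intro c
    rcases le_or_gt 0 c with hc | hc
    · exact base c hc
    · have h1 := base (-c) (by linarith)
      have h2 := (IntervalIntegrable.iff_comp_neg (by simp)).mp h1
      simp only [abs_neg, neg_zero, neg_neg] at h2
      exact h2.symm.symm
  exact (all0 a).symm.trans (all0 b)

open MeasureTheory intervalIntegral in
lemma shift_intervalIntegrable {r : ℝ} (hr : -1 < r) (x a b : ℝ) :
    IntervalIntegrable (fun y : ℝ => |x - y| ^ r) volume a b := by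
  have h := (abs_rpow_intervalIntegrable hr (x - a) (x - b)).comp_sub_left x
  simpa using h

open MeasureTheory intervalIntegral in
lemma S5_le_integral (s x : ℝ) (hs : 1/2 < s) (hs1 : s < 1) (n k : ℕ)
    (h0 : 0 < k) (h2 : k < 2^n) (hx : x = (k:ℝ)/2^n) :
    S5 s x n ≤ ∫ y in (0:ℝ)..1, |x - y| ^ (1 - 2*s) := by
  have hα0 : (1 - 2*s) < 0 := by linarith
  have hα1 : (-1:ℝ) < 1 - 2*s := by linarith
  set f : ℝ → ℝ := fun y => |x - y| ^ (1 - 2*s) with hf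
  have hInt : ∀ a b : ℝ, IntervalIntegrable f volume a b :=
    fun a b => shift_intervalIntegrable hα1 x a b
  set a : ℕ → ℝ := fun i => (i:ℝ)/2^n with ha
  have hmono : ∀ i : ℕ, a i ≤ a (i+1) := by
    intro i
    apply div_le_div_of_nonneg_right ?_ (by positivity)
    push_cast; linarith
  have hmono2 : ∀ i j : ℕ, i ≤ j → a i ≤ a j := by
    intro i j hij
    apply div_le_div_of_nonneg_right ?_ (by positivity)
    exact_mod_cast hij
  have hconstle : ∀ (i : ℕ) (c : ℝ), (∀ t ∈ Set.Icc (a i) (a (i+1)), t ≠ x → c ≤ f t) →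
      0 ≤ c → c * (1/2:ℝ)^n ≤ ∫ y in a i..a (i+1), f y := by
    intro i c hc hc0
    have hlen : a (i+1) - a i = (1/2:ℝ)^n := by
      rw [ha]; push_cast; field_simp; rw [← mul_pow]; norm_num
    have hci : ∫ _ in a i..a (i+1), (c:ℝ) = (1/2:ℝ)^n * c := by
      rw [intervalIntegral.integral_const, smul_eq_mul, hlen]
    have heq : c * (1/2:ℝ)^n = ∫ _ in a i..a (i+1), (c:ℝ) := by rw [hci]; ring
    rw [heq]
    apply integral_mono_ae_restrict (hmono i) intervalIntegrable_const (hInt _ _)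
    have hne : ∀ᵐ t ∂(volume.restrict (Set.Icc (a i) (a (i+1)))), t ≠ x := by
      apply ae_restrict_of_ae
      have hset : {t : ℝ | ¬ t ≠ x} = {x} := by ext t; simp
      rw [ae_iff, hset]
      exact measure_singleton x
    filter_upwards [hne, ae_restrict_mem measurableSet_Icc] with t h1 h2
    exact hc t h2 h1
  have hxak : a k = x := hx.symm
  have hleft : ∀ i ∈ Finset.range k,
      |x - a i| ^ (1-2*s) * dyadicMu n i ≤ ∫ y in a i..a (i+1), f y := by
    intro i hi
    simp only [Finset.mem_range] at hi
    have hc0 : 0 ≤ |x - a i| ^ (1-2*s) := Real.rpow_nonneg (abs_nonneg _) _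
    refine le_trans (mul_le_mul_of_nonneg_left (dyadicMu_le n i) hc0) ?_
    apply hconstle i _ ?_ hc0
    intro t ht htx
    have hax : a (i+1) ≤ x := by rw [← hxak]; exact hmono2 _ _ (by omega)
    have htx' : t ≤ x := le_trans ht.2 hax
    have hait : a i ≤ t := ht.1
    have hd : 0 < |x - t| := abs_pos.mpr (sub_ne_zero.mpr (fun h => htx h.symm))
    have hle : |x - t| ≤ |x - a i| := by
      rw [abs_of_nonneg (by linarith), abs_of_nonneg (by linarith)]
      linarith
    exact Real.rpow_le_rpow_of_nonpos hd hle hα0.le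
  have hright : ∀ j ∈ Finset.range (2^n - k),
      |x - a (k+1+j)| ^ (1-2*s) * dyadicMu n (k+1+j)
        ≤ ∫ y in a (k+j)..a (k+j+1), f y := by
    intro j hj
    have hidx : k+1+j = k+j+1 := by omega
    rw [hidx]
    have hc0 : 0 ≤ |x - a (k+j+1)| ^ (1-2*s) := Real.rpow_nonneg (abs_nonneg _) _
    refine le_trans (mul_le_mul_of_nonneg_left (dyadicMu_le n _) hc0) ?_
    apply hconstle (k+j) _ ?_ hc0
    intro t ht htx
    have hax : x ≤ a (k+j) := by rw [← hxak]; exact hmono2 _ _ (by omega)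
    have htx' : x ≤ t := le_trans hax ht.1
    have hait : t ≤ a (k+j+1) := ht.2
    have hd : 0 < |x - t| := abs_pos.mpr (sub_ne_zero.mpr (fun h => htx h.symm))
    have hxk1 : x ≤ a (k+j+1) := le_trans htx' hait
    have hle : |x - t| ≤ |x - a (k+j+1)| := by
      rw [abs_sub_comm, abs_sub_comm x, abs_of_nonneg (by linarith),
        abs_of_nonneg (by linarith)]
      linarith
    exact Real.rpow_le_rpow_of_nonpos hd hle hα0.le
  have hsplit : (Finset.range (2^n+1)).erase k
      = Finset.range k ∪ Finset.Ico (k+1) (2^n+1) := by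
    ext l
    simp only [Finset.mem_erase, Finset.mem_range, Finset.mem_union, Finset.mem_Ico]
    omega
  have hdisj : Disjoint (Finset.range k) (Finset.Ico (k+1) (2^n+1)) := by
    simp only [Finset.disjoint_left, Finset.mem_range, Finset.mem_Ico]
    intro l h1 h2
    omega
  rw [S5_eq s x n k hx, hsplit, Finset.sum_union hdisj]
  have hL : ∑ l ∈ Finset.range k, |x - (l:ℝ)/2^n| ^ (1-2*s) * dyadicMu n l
      ≤ ∫ y in (0:ℝ)..x, f y := by
    have hadj := sum_integral_adjacent_intervals (a := a) (n := k)
      (fun i _ => hInt _ _) (f := f) (μ := volume)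
    have ha0 : a 0 = 0 := by simp [ha]
    rw [ha0, hxak] at hadj
    rw [← hadj]
    exact Finset.sum_le_sum hleft
  have hR : ∑ l ∈ Finset.Ico (k+1) (2^n+1), |x - (l:ℝ)/2^n| ^ (1-2*s) * dyadicMu n l
      ≤ ∫ y in x..(1:ℝ), f y := by
    rw [Finset.sum_Ico_eq_sum_range]
    have hM : 2^n+1-(k+1) = 2^n - k := by omega
    rw [hM]
    have hadj := sum_integral_adjacent_intervals (a := fun j => a (k+j)) (n := 2^n - k)
      (fun i _ => hInt _ _) (f := f) (μ := volume)
    have hb0 : a (k+0) = x := by rw [Nat.add_zero]; exact hxak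
    have hbM : a (k+(2^n - k)) = 1 := by
      have : k + (2^n - k) = 2^n := by omega
      rw [this, ha]
      push_cast
      field_simp
    beta_reduce at hadj
    rw [hb0, hbM] at hadj
    rw [← hadj]
    exact Finset.sum_le_sum hright
  have htot : (∫ y in (0:ℝ)..x, f y) + (∫ y in x..(1:ℝ), f y)
      = ∫ y in (0:ℝ)..1, f y :=
    integral_add_adjacent_intervals (hInt 0 x) (hInt x 1)
  rw [← htot]
  exact add_le_add hL hR

theorem stmt5 (s : ℝ) (hs : 1 / 2 < s) (hs1 : s < 1)
    (N k0 : ℕ) (hk0 : 0 < k0) (hk0' : k0 < 2 ^ N) :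
    (∀ n m : ℕ, N ≤ n → n ≤ m →
      S5 s ((k0 : ℝ) / 2 ^ N) n ≤ S5 s ((k0 : ℝ) / 2 ^ N) m) ∧
    (∀ n : ℕ, N ≤ n →
      S5 s ((k0 : ℝ) / 2 ^ N) n
        ≤ ∫ y in (0 : ℝ)..1, |(k0 : ℝ) / 2 ^ N - y| ^ (1 - 2 * s)) := by
  have hxrep : ∀ n : ℕ, N ≤ n → (k0:ℝ)/2^N = ((k0 * 2^(n-N) : ℕ):ℝ)/2^n := by
    intro n hn
    have h2n : (2:ℝ)^n = 2^N * 2^(n-N) := by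
      rw [← pow_add]; congr 1; omega
    rw [h2n]; push_cast; rw [div_mul_eq_div_div_swap]
    congr 1
    rw [mul_div_assoc, div_self (by positivity), mul_one]
  have hkpos : ∀ n : ℕ, 0 < k0 * 2^(n-N) :=
    fun n => Nat.mul_pos hk0 (Nat.two_pow_pos _)
  have hklt : ∀ n : ℕ, N ≤ n → k0 * 2^(n-N) < 2^n := by
    intro n hn
    calc k0 * 2^(n-N) < 2^N * 2^(n-N) :=
          (Nat.mul_lt_mul_right (Nat.two_pow_pos _)).mpr hk0'
      _ = 2^n := by rw [← pow_add]; congr 1; omega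
  constructor
  · intro n m hn hnm
    induction m, hnm using Nat.le_induction with
    | base => exact le_rfl
    | succ m hm ih =>
      exact le_trans ih (S5_step s _ hs m _ (hkpos m) (hklt m (by omega))
        (hxrep m (by omega)))
  · intro n hn
    exact S5_le_integral s _ hs hs1 n _ (hkpos n) (hklt n hn) (hxrep n hn)
end

section
/- Fix s ∈ (0,1), Λ > 0, n ∈ ℕ, and x ∈ V_{2-}^(n) = {k/2^{n+1} : 0 ≤ k ≤ 2^n-1}. Suppose j^(n)(x,y) ≤ Λ (y-x)^{-(1+2s)} for y ∈ V_{2+}^(n) = {1 - ℓ/2^{n+1} : 0 ≤ ℓ ≤ 2^n-1}. Then the double sum ∑_{x ∈ V_{2-}^(n)} ∑_{y ∈ V_{2+}^(n)} j^(n)(x,y)(y-x) · 2^{-(n+1)} · 2^{-(n+1)} is bounded by a constant depending only on s and Λ, uniformly in n. -/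
open Finset

-- (1-s) * (m+1)^(-s) ≤ (m+1)^(1-s) - m^(1-s)
lemma stmt8_bernoulli (s : ℝ) (hs : 0 < s) (hs1 : s < 1) (m : ℕ) :
    (1 - s) * ((m : ℝ) + 1) ^ (-s) ≤ ((m : ℝ) + 1) ^ (1 - s) - (m : ℝ) ^ (1 - s) := by
  set t : ℝ := (m : ℝ) with ht
  have ht0 : (0:ℝ) ≤ t := Nat.cast_nonneg m
  have ht1 : (0:ℝ) < t + 1 := by linarith
  have hx : (-1 : ℝ) ≤ -(1 / (t + 1)) := by
    have : 1 / (t + 1) ≤ 1 := by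
      rw [div_le_one ht1]; linarith
    linarith
  have hb := rpow_one_add_le_one_add_mul_self hx (p := 1 - s) (by linarith) (by linarith)
  have h1 : 1 + -(1 / (t + 1)) = t / (t + 1) := by field_simp; ring
  rw [h1] at hb
  -- hb : (t/(t+1))^(1-s) ≤ 1 + (1-s) * -(1/(t+1))
  have hA : (0:ℝ) < (t + 1) ^ (1 - s) := Real.rpow_pos_of_pos ht1 _
  have hdiv : (t / (t + 1)) ^ (1 - s) = t ^ (1 - s) / (t + 1) ^ (1 - s) :=
    Real.div_rpow ht0 ht1.le _
  have hAB : (t + 1) ^ (1 - s) = (t + 1) ^ (-s) * (t + 1) := by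
    rw [show (1 - s : ℝ) = -s + 1 by ring, Real.rpow_add ht1, Real.rpow_one]
  -- multiply hb by (t+1)^(1-s)
  have hmul : (t / (t + 1)) ^ (1 - s) * (t + 1) ^ (1 - s)
      ≤ (1 + (1 - s) * -(1 / (t + 1))) * (t + 1) ^ (1 - s) :=
    mul_le_mul_of_nonneg_right hb hA.le
  rw [hdiv, div_mul_cancel₀ _ hA.ne'] at hmul
  have hRHS : (1 + (1 - s) * -(1 / (t + 1))) * (t + 1) ^ (1 - s)
      = (t + 1) ^ (1 - s) - (1 - s) * (t + 1) ^ (-s) := by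
    rw [hAB]; field_simp; ring
  rw [hRHS] at hmul
  linarith

-- ∑_{m<M} (m+1)^(-s) ≤ M^(1-s) / (1-s)
lemma stmt8_sum_pow (s : ℝ) (hs : 0 < s) (hs1 : s < 1) (M : ℕ) :
    ∑ m ∈ Finset.range M, ((m : ℝ) + 1) ^ (-s) ≤ (M : ℝ) ^ (1 - s) / (1 - s) := by
  have h1s : (0:ℝ) < 1 - s := by linarith
  rw [le_div_iff₀ h1s]
  have tel : ∑ m ∈ Finset.range M,
        ((((m + 1 : ℕ)) : ℝ) ^ (1 - s) - ((m : ℕ) : ℝ) ^ (1 - s))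
      = ((M : ℕ) : ℝ) ^ (1 - s) - ((0 : ℕ) : ℝ) ^ (1 - s) :=
    Finset.sum_range_sub (fun i => ((i : ℕ) : ℝ) ^ (1 - s)) M
  have h0 : ((0 : ℕ) : ℝ) ^ (1 - s) = 0 := by
    rw [Nat.cast_zero, Real.zero_rpow h1s.ne']
  calc (∑ m ∈ Finset.range M, ((m : ℝ) + 1) ^ (-s)) * (1 - s)
      = ∑ m ∈ Finset.range M, (1 - s) * ((m : ℝ) + 1) ^ (-s) := by
        rw [Finset.sum_mul]; apply Finset.sum_congr rfl; intro m _; ring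
    _ ≤ ∑ m ∈ Finset.range M,
        ((((m + 1 : ℕ)) : ℝ) ^ (1 - s) - ((m : ℕ) : ℝ) ^ (1 - s)) := by
        apply Finset.sum_le_sum
        intro m _
        have := stmt8_bernoulli s hs hs1 m
        push_cast
        linarith
    _ = (M : ℝ) ^ (1 - s) := by rw [tel, h0]; ring

-- reflected sum bound
lemma stmt8_sum_refl (s : ℝ) (hs : 0 < s) (hs1 : s < 1) (K : ℕ) :
    ∑ k ∈ Finset.range K, ((K : ℝ) - (k : ℝ)) ^ (-s) ≤ (K : ℝ) ^ (1 - s) / (1 - s) := by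
  have hrefl := Finset.sum_range_reflect (fun j => ((j : ℝ) + 1) ^ (-s)) K
  -- hrefl : ∑ j in range K, ((K - 1 - j : ℕ) + 1)^(-s) = ∑ j in range K, (j+1)^(-s)
  have heq : ∑ k ∈ Finset.range K, ((K : ℝ) - (k : ℝ)) ^ (-s)
      = ∑ j ∈ Finset.range K, (((K - 1 - j : ℕ) : ℝ) + 1) ^ (-s) := by
    apply Finset.sum_congr rfl
    intro k hk
    have hk' : k < K := Finset.mem_range.mp hk
    congr 1
    rw [show K - 1 - k = K - (k + 1) by omega, Nat.cast_sub (by omega)]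
    push_cast
    ring
  rw [heq, hrefl]
  exact stmt8_sum_pow s hs hs1 K

theorem stmt8 (s Λ : ℝ) (hs : 0 < s) (hs1 : s < 1) (hΛ : 0 < Λ) :
    ∃ C : ℝ, ∀ j : ℕ → ℝ → ℝ → ℝ,
      (∀ n : ℕ, ∀ k ∈ Finset.range (2 ^ n), ∀ l ∈ Finset.range (2 ^ n),
        j n ((k : ℝ) / 2 ^ (n + 1)) (1 - (l : ℝ) / 2 ^ (n + 1))
          ≤ Λ * ((1 - (l : ℝ) / 2 ^ (n + 1)) - (k : ℝ) / 2 ^ (n + 1)) ^ (-(1 + 2 * s))) →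
      ∀ n : ℕ,
        ∑ k ∈ Finset.range (2 ^ n), ∑ l ∈ Finset.range (2 ^ n),
          j n ((k : ℝ) / 2 ^ (n + 1)) (1 - (l : ℝ) / 2 ^ (n + 1))
            * ((1 - (l : ℝ) / 2 ^ (n + 1)) - (k : ℝ) / 2 ^ (n + 1))
            * (1 / 2 : ℝ) ^ (n + 1) * (1 / 2 : ℝ) ^ (n + 1) ≤ C := by
  have h1s : (0:ℝ) < 1 - s := by linarith
  refine ⟨Λ / (1 - s) ^ 2, ?_⟩
  intro j hj n
  set K : ℕ := 2 ^ n with hKdef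
  have hKpos : (0:ℝ) < (K : ℝ) := by positivity
  set Nr : ℝ := 2 ^ (n + 1) with hNrdef
  have hNrpos : (0:ℝ) < Nr := by positivity
  have hNK : Nr = 2 * (K : ℝ) := by
    rw [hNrdef, hKdef]; push_cast; ring
  -- per-term bound
  have key : ∀ k ∈ Finset.range K, ∀ l ∈ Finset.range K,
      j n ((k : ℝ) / 2 ^ (n + 1)) (1 - (l : ℝ) / 2 ^ (n + 1))
        * ((1 - (l : ℝ) / 2 ^ (n + 1)) - (k : ℝ) / 2 ^ (n + 1))
        * (1 / 2 : ℝ) ^ (n + 1) * (1 / 2 : ℝ) ^ (n + 1)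
      ≤ Λ * (Nr ^ (2 * s) / Nr ^ 2)
          * (((K : ℝ) - k) ^ (-s) * (((K : ℝ) - l) ^ (-s))) := by
    intro k hk l hl
    have hkK : (k : ℝ) ≤ (K : ℝ) - 1 := by
      have := Finset.mem_range.mp hk
      have : (k : ℝ) + 1 ≤ (K : ℝ) := by exact_mod_cast this
      linarith
    have hlK : (l : ℝ) ≤ (K : ℝ) - 1 := by
      have := Finset.mem_range.mp hl
      have : (l : ℝ) + 1 ≤ (K : ℝ) := by exact_mod_cast this
      linarith
    set a : ℝ := (K : ℝ) - k with hadef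
    set b : ℝ := (K : ℝ) - l with hbdef
    have ha1 : (1:ℝ) ≤ a := by rw [hadef]; linarith
    have hb1 : (1:ℝ) ≤ b := by rw [hbdef]; linarith
    set d : ℝ := (1 - (l : ℝ) / 2 ^ (n + 1)) - (k : ℝ) / 2 ^ (n + 1) with hddef
    have hd : d = (a + b) / Nr := by
      have h2K : (2 : ℝ) ^ (n + 1) = 2 * (K : ℝ) := hNK
      rw [hddef, hadef, hbdef, hNrdef]
      field_simp
      rw [h2K]
      ring
    have hdpos : 0 < d := by
      rw [hd]
      positivity
    have hjb : j n ((k : ℝ) / 2 ^ (n + 1)) (1 - (l : ℝ) / 2 ^ (n + 1))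
        ≤ Λ * d ^ (-(1 + 2 * s)) := hj n k hk l hl
    have hhalf : ((1 / 2 : ℝ) ^ (n + 1)) = 1 / Nr := by
      rw [hNrdef, div_pow, one_pow]
    have hdd : d ^ (-(1 + 2 * s)) * d = d ^ (-(2 * s)) := by
      have h := Real.rpow_add hdpos (-(1 + 2 * s)) 1
      rw [Real.rpow_one] at h
      rw [← h]
      congr 1
      ring
    have hdbound : d ^ (-(2 * s)) ≤ a ^ (-s) * b ^ (-s) * Nr ^ (2 * s) := by
      have habpos : (0:ℝ) < a + b := by linarith
      have hstep1 : d ^ (-(2 * s)) = (a + b) ^ (-(2 * s)) * Nr ^ (2 * s) := by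
        rw [hd, Real.div_rpow habpos.le hNrpos.le, Real.rpow_neg hNrpos.le (2 * s),
          div_inv_eq_mul]
      rw [hstep1]
      apply mul_le_mul_of_nonneg_right _ (Real.rpow_nonneg hNrpos.le _)
      have hsq : (a + b) ^ (-(2 * s)) = ((a + b) ^ 2) ^ (-s) := by
        rw [← Real.rpow_natCast_mul habpos.le 2 (-s)]
        congr 1
        push_cast; ring
      rw [hsq]
      have hle : a * b ≤ (a + b) ^ 2 := by nlinarith
      have habpos' : (0:ℝ) < a * b := by nlinarith
      calc ((a + b) ^ 2) ^ (-s) ≤ (a * b) ^ (-s) :=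
            Real.rpow_le_rpow_of_nonpos habpos' hle (by linarith)
        _ = a ^ (-s) * b ^ (-s) := Real.mul_rpow (by linarith) (by linarith)
    have hdnn : 0 ≤ d := hdpos.le
    have hhnn : (0:ℝ) ≤ (1 / 2 : ℝ) ^ (n + 1) := by positivity
    calc j n ((k : ℝ) / 2 ^ (n + 1)) (1 - (l : ℝ) / 2 ^ (n + 1)) * d
          * (1 / 2 : ℝ) ^ (n + 1) * (1 / 2 : ℝ) ^ (n + 1)
        ≤ (Λ * d ^ (-(1 + 2 * s))) * d * (1 / 2 : ℝ) ^ (n + 1) * (1 / 2 : ℝ) ^ (n + 1) := by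
          apply mul_le_mul_of_nonneg_right _ hhnn
          apply mul_le_mul_of_nonneg_right _ hhnn
          exact mul_le_mul_of_nonneg_right hjb hdnn
      _ = Λ * (d ^ (-(1 + 2 * s)) * d) * (1 / Nr) * (1 / Nr) := by rw [hhalf]; ring
      _ = Λ * d ^ (-(2 * s)) / Nr ^ 2 := by rw [hdd]; field_simp
      _ ≤ Λ * (a ^ (-s) * b ^ (-s) * Nr ^ (2 * s)) / Nr ^ 2 := by
          apply div_le_div_of_nonneg_right _ (by positivity)
          exact mul_le_mul_of_nonneg_left hdbound hΛ.le
      _ = Λ * (Nr ^ (2 * s) / Nr ^ 2) * (a ^ (-s) * b ^ (-s)) := by ring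
  -- sum it up
  have hsum : ∑ k ∈ Finset.range K, ∑ l ∈ Finset.range K,
      j n ((k : ℝ) / 2 ^ (n + 1)) (1 - (l : ℝ) / 2 ^ (n + 1))
        * ((1 - (l : ℝ) / 2 ^ (n + 1)) - (k : ℝ) / 2 ^ (n + 1))
        * (1 / 2 : ℝ) ^ (n + 1) * (1 / 2 : ℝ) ^ (n + 1)
      ≤ Λ * (Nr ^ (2 * s) / Nr ^ 2)
          * ((∑ k ∈ Finset.range K, ((K : ℝ) - k) ^ (-s))
            * (∑ l ∈ Finset.range K, ((K : ℝ) - l) ^ (-s))) := by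
    have : ∑ k ∈ Finset.range K, ∑ l ∈ Finset.range K,
        (Λ * (Nr ^ (2 * s) / Nr ^ 2) * (((K : ℝ) - k) ^ (-s) * (((K : ℝ) - l) ^ (-s))))
        = Λ * (Nr ^ (2 * s) / Nr ^ 2)
          * ((∑ k ∈ Finset.range K, ((K : ℝ) - k) ^ (-s))
            * (∑ l ∈ Finset.range K, ((K : ℝ) - l) ^ (-s))) := by
      simp only [Finset.sum_mul_sum, Finset.mul_sum]
      apply Finset.sum_congr rfl
      intro k _
      rw [Finset.sum_mul, Finset.mul_sum]
      apply Finset.sum_congr rfl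
      intro l _
      ring
    rw [← this]
    apply Finset.sum_le_sum
    intro k hk
    apply Finset.sum_le_sum
    intro l hl
    exact key k hk l hl
  refine hsum.trans ?_
  -- final bound
  have hS : ∑ k ∈ Finset.range K, ((K : ℝ) - k) ^ (-s) ≤ Nr ^ (1 - s) / (1 - s) := by
    refine (stmt8_sum_refl s hs hs1 K).trans ?_
    gcongr
    all_goals first
      | exact hKpos.le
      | linarith
  have hSnn : 0 ≤ ∑ k ∈ Finset.range K, ((K : ℝ) - k) ^ (-s) := by
    apply Finset.sum_nonneg
    intro k hk
    have hk' : (k : ℝ) < (K : ℝ) := by exact_mod_cast Finset.mem_range.mp hk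
    exact Real.rpow_nonneg (by linarith) _
  have hfinal : Λ * (Nr ^ (2 * s) / Nr ^ 2)
      * ((Nr ^ (1 - s) / (1 - s)) * (Nr ^ (1 - s) / (1 - s))) = Λ / (1 - s) ^ 2 := by
    have h1 : Nr ^ (2 * s) * (Nr ^ (1 - s) * Nr ^ (1 - s)) = Nr ^ 2 := by
      rw [← Real.rpow_add hNrpos, ← Real.rpow_add hNrpos,
        show 2 * s + (1 - s + (1 - s)) = ((2 : ℕ) : ℝ) by push_cast; ring,
        Real.rpow_natCast]
    rw [show Λ * (Nr ^ (2 * s) / Nr ^ 2) * ((Nr ^ (1 - s) / (1 - s)) * (Nr ^ (1 - s) / (1 - s)))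
        = (Nr ^ (2 * s) * (Nr ^ (1 - s) * Nr ^ (1 - s))) * Λ / Nr ^ 2 / (1 - s) / (1 - s) by ring, h1,
      mul_div_cancel_left₀ _ (pow_ne_zero 2 hNrpos.ne'), div_div, ← sq]
  calc Λ * (Nr ^ (2 * s) / Nr ^ 2)
        * ((∑ k ∈ Finset.range K, ((K : ℝ) - k) ^ (-s))
          * (∑ l ∈ Finset.range K, ((K : ℝ) - l) ^ (-s)))
      ≤ Λ * (Nr ^ (2 * s) / Nr ^ 2)
        * ((Nr ^ (1 - s) / (1 - s)) * (Nr ^ (1 - s) / (1 - s))) := by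
        apply mul_le_mul_of_nonneg_left _ (by positivity)
        exact mul_le_mul hS hS hSnn (by positivity)
    _ = Λ / (1 - s) ^ 2 := hfinal
end

section
/- Let s ∈ (0, 1/2) and λ > 0, and suppose j^(n)(x,y) ≥ λ|x-y|^{-(1+2s)} for all distinct x,y ∈ V^(n). Then there exists a constant c > 0 depending only on s such that for every function u on V^(n), the discrete energy E^(n)(u) = ∑_{x,y ∈ V^(n)} (u(x)-u(y))^2 j^(n)(x,y)μ^(n)(x)μ^(n)(y) satisfies E^(n)(u) ≥ c λ [Ext^(n) u]_{H^s([0,1])}^2, where Ext^(n) u is the piecewise constant extension of u with respect to the dyadic partition {U^(n)(x̄)}. -/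
noncomputable def discreteEnergy (j : ℕ → ℝ → ℝ → ℝ) (u : ℝ → ℝ) (n : ℕ) : ℝ :=
  ∑ k ∈ Finset.range (2 ^ n + 1), ∑ l ∈ Finset.range (2 ^ n + 1),
    (u ((k : ℝ) / 2 ^ n) - u ((l : ℝ) / 2 ^ n)) ^ 2
      * j n ((k : ℝ) / 2 ^ n) ((l : ℝ) / 2 ^ n) * dyadicMu n k * dyadicMu n l

/-- Piecewise constant extension of `u` with respect to the dyadic partition
`{U^(n)(x̄)}`: `Ext^(n) u (x) = u(x̄)` where `x̄` is the dyadic node nearest `x`. -/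
noncomputable def extOp (n : ℕ) (u : ℝ → ℝ) (x : ℝ) : ℝ :=
  u ((round (x * 2 ^ n) : ℝ) / 2 ^ n)

open MeasureTheory Set Real

namespace Stmt13

noncomputable def nd (n k : ℕ) : ℝ := max 0 (min 1 ((2 * (k : ℝ) - 1) / (2 * 2 ^ n)))

lemma two_pow_pos (n : ℕ) : (0:ℝ) < 2 ^ n := by positivity

lemma nd_zero (n : ℕ) : nd n 0 = 0 := by
  have h : ((2:ℝ) * (0:ℕ) - 1) / (2 * 2 ^ n) ≤ 0 := by
    apply div_nonpos_of_nonpos_of_nonneg <;> [norm_num; positivity]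
  exact max_eq_left (le_trans (min_le_right _ _) h)

lemma nd_top (n : ℕ) : nd n (2 ^ n + 1) = 1 := by
  have h2 : (0:ℝ) < 2 ^ n := two_pow_pos n
  have h : (1:ℝ) ≤ (2 * ((2 ^ n + 1 : ℕ) : ℝ) - 1) / (2 * 2 ^ n) := by
    rw [le_div_iff₀ (by positivity)]
    push_cast
    nlinarith
  rw [nd, min_eq_left h]
  exact max_eq_right zero_le_one

lemma t_le_nd (n k : ℕ) (hk : k ≤ 2 ^ n) : (2 * (k:ℝ) - 1) / (2 * 2 ^ n) ≤ nd n k := by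
  have h2 : (0:ℝ) < 2 ^ n := two_pow_pos n
  have hk' : (k:ℝ) ≤ 2 ^ n := by exact_mod_cast Nat.cast_le.mpr hk
  have ht1 : (2 * (k:ℝ) - 1) / (2 * 2 ^ n) ≤ 1 := by
    rw [div_le_one (by positivity)]; nlinarith
  rw [nd, min_eq_right ht1]
  exact le_max_right _ _

lemma nd_le_t (n k : ℕ) (hk : 1 ≤ k) : nd n k ≤ (2 * (k:ℝ) - 1) / (2 * 2 ^ n) := by
  have h2 : (0:ℝ) < 2 ^ n := two_pow_pos n
  have hk' : (1:ℝ) ≤ (k:ℝ) := by exact_mod_cast hk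
  have ht0 : (0:ℝ) ≤ (2 * (k:ℝ) - 1) / (2 * 2 ^ n) := by
    apply div_nonneg (by nlinarith) (by positivity)
  exact max_le ht0 (min_le_right _ _)

lemma nd_nonneg (n k : ℕ) : 0 ≤ nd n k := le_max_left _ _

lemma nd_le_one (n k : ℕ) : nd n k ≤ 1 := max_le zero_le_one (min_le_left _ _)

lemma nd_mono (n : ℕ) : Monotone (nd n) := by
  intro k l hkl
  have hc : (k:ℝ) ≤ l := by exact_mod_cast hkl
  have h3 : (0:ℝ) < 2 * 2 ^ n := by positivity
  have : (2 * (k:ℝ) - 1) / (2 * 2 ^ n) ≤ (2 * (l:ℝ) - 1) / (2 * 2 ^ n) := by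
    rw [div_le_div_iff₀ h3 h3]; nlinarith
  exact max_le_max le_rfl (min_le_min le_rfl this)

lemma dyadicMu_pos (n k : ℕ) : 0 < dyadicMu n k := by
  rw [dyadicMu]; split <;> positivity

lemma dyadicMu_le (n k : ℕ) : dyadicMu n k ≤ ((2:ℝ) ^ n)⁻¹ := by
  rw [dyadicMu]
  have h2 : (0:ℝ) < 2 ^ n := two_pow_pos n
  have e1 : ((1:ℝ)/2)^(n+1) = (2 * 2^n : ℝ)⁻¹ := by
    rw [div_pow, one_pow, pow_succ, one_div]; ring_nf
  have e2 : ((1:ℝ)/2)^n = ((2:ℝ)^n)⁻¹ := by rw [div_pow, one_pow, one_div]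
  split
  · rw [e1]
    have : (2:ℝ)^n ≤ 2 * 2^n := by linarith
    exact inv_anti₀ h2 this
  · rw [e2]

lemma inv_le_two_dyadicMu (n k : ℕ) : ((2:ℝ) ^ n)⁻¹ ≤ 2 * dyadicMu n k := by
  rw [dyadicMu]
  have h2 : (0:ℝ) < 2 ^ n := two_pow_pos n
  have e1 : ((1:ℝ)/2)^(n+1) = (2 * 2^n : ℝ)⁻¹ := by
    rw [div_pow, one_pow, pow_succ, one_div]; ring_nf
  have e2 : ((1:ℝ)/2)^n = ((2:ℝ)^n)⁻¹ := by rw [div_pow, one_pow, one_div]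
  split
  · rw [e1]
    rw [show (2:ℝ) * (2 * 2^n)⁻¹ = (2^n)⁻¹ by field_simp]
  · rw [e2]
    have : (0:ℝ) < ((2:ℝ)^n)⁻¹ := by positivity
    linarith

lemma mu_eq (n k : ℕ) (hk : k ≤ 2 ^ n) : nd n (k + 1) - nd n k = dyadicMu n k := by
  have h2 : (0:ℝ) < 2 ^ n := two_pow_pos n
  have hmu0 : ((1:ℝ)/2) ^ (n+1) = 1 / (2 * 2 ^ n) := by
    rw [div_pow, one_pow, pow_succ]; ring
  rcases eq_or_ne k 0 with rfl | hk0
  · rw [nd_zero, sub_zero, dyadicMu, if_pos (Or.inl rfl), hmu0]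
    have h1 : nd n 1 = (2 * ((1:ℕ):ℝ) - 1) / (2 * 2 ^ n) := le_antisymm
      (nd_le_t n 1 le_rfl)
      (t_le_nd n 1 Nat.one_le_two_pow)
    rw [show ((0:ℕ)+1) = 1 from rfl, h1]
    norm_num
  rcases eq_or_ne k (2 ^ n) with rfl | hkN
  · rw [nd_top, dyadicMu, if_pos (Or.inr rfl), hmu0]
    have h1 : nd n (2 ^ n) = (2 * ((2^n : ℕ):ℝ) - 1) / (2 * 2 ^ n) := le_antisymm
      (nd_le_t n _ Nat.one_le_two_pow) (t_le_nd n _ le_rfl)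
    rw [h1]
    push_cast
    field_simp
    ring
  · have hk1 : 1 ≤ k := Nat.one_le_iff_ne_zero.mpr hk0
    have hkN' : k + 1 ≤ 2 ^ n := Nat.lt_of_le_of_ne hk hkN
    rw [dyadicMu, if_neg (by push_neg; exact ⟨hk0, hkN⟩)]
    have h1 : nd n k = (2 * (k:ℝ) - 1) / (2 * 2 ^ n) :=
      le_antisymm (nd_le_t n k hk1) (t_le_nd n k hk)
    have h2' : nd n (k+1) = (2 * ((k+1:ℕ):ℝ) - 1) / (2 * 2 ^ n) :=
      le_antisymm (nd_le_t n (k+1) (by omega)) (t_le_nd n (k+1) hkN')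
    rw [h1, h2']
    rw [div_pow, one_pow]
    push_cast
    field_simp
    ring

lemma round_eq_nd (n k : ℕ) (hk : k ≤ 2 ^ n) {x : ℝ}
    (hx : x ∈ Ico (nd n k) (nd n (k + 1))) : round (x * 2 ^ n) = (k : ℤ) := by
  have h2 : (0:ℝ) < 2 ^ n := two_pow_pos n
  have hlo : (2 * (k:ℝ) - 1) / (2 * 2 ^ n) ≤ x := le_trans (t_le_nd n k hk) hx.1
  have hhi : x < (2 * ((k+1:ℕ):ℝ) - 1) / (2 * 2 ^ n) :=
    lt_of_lt_of_le hx.2 (nd_le_t n (k+1) (by omega))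
  rw [round_eq]
  apply Int.floor_eq_iff.mpr
  constructor
  · push_cast
    rw [div_le_iff₀ (by positivity)] at hlo
    nlinarith
  · push_cast
    push_cast at hhi
    rw [lt_div_iff₀ (by positivity)] at hhi
    nlinarith

lemma ext_eq_nd (n k : ℕ) (u : ℝ → ℝ) (hk : k ≤ 2 ^ n) {x : ℝ}
    (hx : x ∈ Ico (nd n k) (nd n (k + 1))) : extOp n u x = u ((k:ℝ) / 2 ^ n) := by
  rw [extOp, round_eq_nd n k hk hx]
  norm_num

lemma exists_Ico (n : ℕ) {x : ℝ} (hx : x ∈ Ico (0:ℝ) 1) :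
    ∃ k, k ≤ 2 ^ n ∧ x ∈ Ico (nd n k) (nd n (k + 1)) := by
  have h2 : (0:ℝ) < 2 ^ n := two_pow_pos n
  set r : ℤ := round (x * 2 ^ n) with hr
  have h1 : (r:ℝ) - 1/2 ≤ x * 2 ^ n := by
    rw [hr, round_eq]
    have := Int.floor_le (x * 2 ^ n + 1/2)
    linarith
  have h2' : x * 2 ^ n < (r:ℝ) + 1/2 := by
    rw [hr, round_eq]
    have := Int.lt_floor_add_one (x * 2 ^ n + 1/2)
    linarith
  have hx0 : (0:ℝ) ≤ x := hx.1
  have hx1 : x < 1 := hx.2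
  have hr0 : 0 ≤ r := by
    by_contra h
    push_neg at h
    have : (r:ℝ) ≤ -1 := by exact_mod_cast Int.le_of_lt_add_one (by exact_mod_cast h)
    nlinarith
  have hrN : r ≤ 2 ^ n := by
    by_contra h
    push_neg at h
    have : (2^n + 1 : ℝ) ≤ (r:ℝ) := by exact_mod_cast h
    nlinarith
  have hc0 : ((r.toNat : ℕ):ℝ) = (r:ℝ) := by
    exact_mod_cast Int.toNat_of_nonneg hr0
  refine ⟨r.toNat, Int.toNat_le.mpr (by exact_mod_cast hrN), ?_, ?_⟩
  · refine max_le hx0 (le_trans (min_le_right _ _) ?_)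
    rw [hc0]
    rw [div_le_iff₀ (by positivity)]
    nlinarith
  · have hc : ((r.toNat + 1 : ℕ):ℝ) = (r:ℝ) + 1 := by
      have h' : ((r.toNat + 1 : ℕ):ℝ) = ((r.toNat : ℕ):ℝ) + 1 := by push_cast; ring
      rw [h', hc0]
    have hxt : x < (2 * ((r.toNat + 1 : ℕ):ℝ) - 1) / (2 * 2 ^ n) := by
      rw [hc, lt_div_iff₀ (by positivity)]
      nlinarith
    calc x < min 1 ((2 * ((r.toNat + 1 : ℕ):ℝ) - 1) / (2 * 2 ^ n)) := lt_min hx1 hxt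
    _ ≤ nd n (r.toNat + 1) := le_max_right _ _

lemma exists_Ioo (n : ℕ) {x : ℝ} (hx : x ∈ Ico (0:ℝ) 1) (hnode : ∀ k, x ≠ nd n k) :
    ∃ k, k ≤ 2 ^ n ∧ x ∈ Ioo (nd n k) (nd n (k + 1)) := by
  obtain ⟨k, hk, h1, h2⟩ := exists_Ico n hx
  exact ⟨k, hk, lt_of_le_of_ne h1 (Ne.symm (hnode k)), h2⟩

lemma ae_good (n : ℕ) : ∀ᵐ x ∂(volume.restrict (Icc (0:ℝ) 1)),
    x ∈ Ico (0:ℝ) 1 ∧ ∀ k, x ≠ nd n k := by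
  have h1 : ∀ᵐ x ∂(volume.restrict (Icc (0:ℝ) 1)), x ∈ Icc (0:ℝ) 1 :=
    ae_restrict_mem measurableSet_Icc
  have h2 : (volume ({1} ∪ Set.range (nd n) : Set ℝ)) = 0 := by
    apply measure_union_null
    · simp
    · exact (Set.countable_range _).measure_zero _
  have h3 : ∀ᵐ x ∂(volume.restrict (Icc (0:ℝ) 1)), x ∉ ({1} ∪ Set.range (nd n) : Set ℝ) :=
    ae_restrict_of_ae (measure_eq_zero_iff_ae_notMem.mp h2)
  filter_upwards [h1, h3] with x hx hbad
  constructor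
  · exact ⟨hx.1, lt_of_le_of_ne hx.2 (fun h => hbad (Or.inl h))⟩
  · intro k h
    exact hbad (Or.inr ⟨k, h.symm⟩)

variable {s : ℝ}

lemma ker_meas (x : ℝ) (s : ℝ) : Measurable fun y : ℝ => |x - y| ^ (-(1 + 2 * s)) :=
  ((measurable_const.sub measurable_id).abs).pow measurable_const

lemma ker_nonneg (x y s : ℝ) : 0 ≤ |x - y| ^ (-(1 + 2 * s)) :=
  rpow_nonneg (abs_nonneg _) _

lemma integrableOn_ker (hs : 0 < s) {x d A B : ℝ} (hd : 0 < d)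
    (h : ∀ y ∈ Ico A B, d ≤ |x - y|) :
    IntegrableOn (fun y => |x - y| ^ (-(1 + 2 * s))) (Ico A B) volume := by
  apply Measure.integrableOn_of_bounded (M := d ^ (-(1 + 2 * s))) measure_Ico_lt_top.ne
    (ker_meas x s).aestronglyMeasurable
  filter_upwards [ae_restrict_mem measurableSet_Ico] with y hy
  rw [Real.norm_eq_abs, abs_of_nonneg (ker_nonneg _ _ _)]
  exact rpow_le_rpow_of_nonpos hd (h y hy) (by linarith)

lemma int_flat (hs : 0 < s) {x d A B : ℝ} (hd : 0 < d) (hAB : A ≤ B)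
    (h : ∀ y ∈ Ico A B, d ≤ |x - y|) :
    ∫ y in Ico A B, |x - y| ^ (-(1 + 2 * s)) ≤ (B - A) * d ^ (-(1 + 2 * s)) := by
  have h1 : ∫ y in Ico A B, |x - y| ^ (-(1 + 2 * s)) ≤ ∫ _ in Ico A B, d ^ (-(1 + 2 * s)) := by
    apply setIntegral_mono_on (integrableOn_ker hs hd h)
      (integrableOn_const measure_Ico_lt_top.ne) measurableSet_Ico
    exact fun y hy => rpow_le_rpow_of_nonpos hd (h y hy) (by linarith)
  calc ∫ y in Ico A B, |x - y| ^ (-(1 + 2 * s)) ≤ _ := h1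
  _ = (B - A) * d ^ (-(1 + 2 * s)) := by
    rw [setIntegral_const, measureReal_def, Real.volume_Ico, smul_eq_mul, ENNReal.toReal_ofReal (by linarith)]

lemma int_right (hs : 0 < s) {x A B : ℝ} (hxA : x < A) (hAB : A ≤ B) :
    ∫ y in Ico A B, |x - y| ^ (-(1 + 2 * s)) ≤ (A - x) ^ (-(2 * s)) / (2 * s) := by
  have h0 : ∫ y in Ico A B, |x - y| ^ (-(1 + 2 * s))
      = ∫ y in Ico A B, (y - x) ^ (-(1 + 2 * s)) := by
    apply setIntegral_congr_fun measurableSet_Ico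
    intro y hy
    dsimp only
    rw [abs_sub_comm, abs_of_pos (by linarith [hy.1])]
  rw [h0, integral_Ico_eq_integral_Ioo, ← integral_Ioc_eq_integral_Ioo,
    ← intervalIntegral.integral_of_le hAB]
  rw [intervalIntegral.integral_comp_sub_right (fun t => t ^ (-(1 + 2 * s))) x]
  rw [integral_rpow (Or.inr ⟨by intro h; nlinarith,
    notMem_uIcc_of_lt (by linarith) (by linarith)⟩)]
  have he : -(1 + 2 * s) + 1 = -(2 * s) := by ring
  rw [he]
  have h1 : (0:ℝ) ≤ (B - x) ^ (-(2 * s)) := rpow_nonneg (by linarith) _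
  have key : ((B - x) ^ (-(2*s)) - (A - x) ^ (-(2*s))) / (-(2*s))
      = ((A - x) ^ (-(2*s)) - (B - x) ^ (-(2*s))) / (2*s) := by ring
  rw [key]
  gcongr
  linarith

lemma int_left (hs : 0 < s) {x A B : ℝ} (hBx : B < x) (hAB : A ≤ B) :
    ∫ y in Ico A B, |x - y| ^ (-(1 + 2 * s)) ≤ (x - B) ^ (-(2 * s)) / (2 * s) := by
  have h0 : ∫ y in Ico A B, |x - y| ^ (-(1 + 2 * s))
      = ∫ y in Ico A B, (x - y) ^ (-(1 + 2 * s)) := by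
    apply setIntegral_congr_fun measurableSet_Ico
    intro y hy
    dsimp only
    rw [abs_of_pos (by linarith [hy.2])]
  rw [h0, integral_Ico_eq_integral_Ioo, ← integral_Ioc_eq_integral_Ioo,
    ← intervalIntegral.integral_of_le hAB]
  rw [intervalIntegral.integral_comp_sub_left (fun t => t ^ (-(1 + 2 * s))) x]
  rw [integral_rpow (Or.inr ⟨by intro h; nlinarith,
    notMem_uIcc_of_lt (by linarith) (by linarith)⟩)]
  have he : -(1 + 2 * s) + 1 = -(2 * s) := by ring
  rw [he]
  have h1 : (0:ℝ) ≤ (x - A) ^ (-(2 * s)) := rpow_nonneg (by linarith) _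
  have key : ((x - A) ^ (-(2*s)) - (x - B) ^ (-(2*s))) / (-(2*s))
      = ((x - B) ^ (-(2*s)) - (x - A) ^ (-(2*s))) / (2*s) := by ring
  rw [key]
  gcongr
  linarith

lemma int_mid_right (hs : 0 < s) (hs2 : s < 1/2) {A B : ℝ} (hAB : A ≤ B) :
    ∫ x in Ico A B, (B - x) ^ (-(2 * s)) = (B - A) ^ (1 - 2 * s) / (1 - 2 * s) := by
  rw [integral_Ico_eq_integral_Ioo, ← integral_Ioc_eq_integral_Ioo,
    ← intervalIntegral.integral_of_le hAB]
  rw [intervalIntegral.integral_comp_sub_left (fun t => t ^ (-(2 * s))) B]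
  rw [sub_self]
  rw [integral_rpow (Or.inl (by linarith))]
  rw [zero_rpow (by intro h; nlinarith)]
  have he : -(2 * s) + 1 = 1 - 2 * s := by ring
  rw [he, sub_zero]

lemma int_mid_left (hs : 0 < s) (hs2 : s < 1/2) {A B : ℝ} (hAB : A ≤ B) :
    ∫ x in Ico A B, (x - A) ^ (-(2 * s)) = (B - A) ^ (1 - 2 * s) / (1 - 2 * s) := by
  rw [integral_Ico_eq_integral_Ioo, ← integral_Ioc_eq_integral_Ioo,
    ← intervalIntegral.integral_of_le hAB]
  rw [intervalIntegral.integral_comp_sub_right (fun t => t ^ (-(2 * s))) A]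
  rw [sub_self]
  rw [integral_rpow (Or.inl (by linarith))]
  rw [zero_rpow (by intro h; nlinarith)]
  have he : -(2 * s) + 1 = 1 - 2 * s := by ring
  rw [he, sub_zero]

lemma integrableOn_mid_right (hs : 0 < s) (hs2 : s < 1/2) {A B : ℝ} (hAB : A ≤ B) :
    IntegrableOn (fun x => (B - x) ^ (-(2 * s))) (Ico A B) volume := by
  have h0 : IntervalIntegrable (fun t : ℝ => t ^ (-(2 * s))) volume 0 (B - A) :=
    intervalIntegral.intervalIntegrable_rpow' (by linarith)
  have h : IntervalIntegrable (fun x : ℝ => (B - x) ^ (-(2 * s))) volume (B - 0) (B - (B - A)) :=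
    IntervalIntegrable.comp_sub_left h0 B
  rw [sub_zero, sub_sub_cancel] at h
  have h2 := (intervalIntegrable_iff_integrableOn_Ioc_of_le hAB).mp h.symm
  exact (Iff.mpr integrableOn_Icc_iff_integrableOn_Ioc h2).mono_set Ico_subset_Icc_self

lemma integrableOn_mid_left (hs : 0 < s) (hs2 : s < 1/2) {A B : ℝ} (hAB : A ≤ B) :
    IntegrableOn (fun x => (x - A) ^ (-(2 * s))) (Ico A B) volume := by
  have h0 : IntervalIntegrable (fun t : ℝ => t ^ (-(2 * s))) volume 0 (B - A) :=
    intervalIntegral.intervalIntegrable_rpow' (by linarith)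
  have h : IntervalIntegrable (fun x : ℝ => (x - A) ^ (-(2 * s))) volume (0 + A) (B - A + A) :=
    IntervalIntegrable.comp_sub_right h0 A
  rw [zero_add, sub_add_cancel] at h
  have h2 := (intervalIntegrable_iff_integrableOn_Ioc_of_le hAB).mp h
  exact (Iff.mpr integrableOn_Icc_iff_integrableOn_Ioc h2).mono_set Ico_subset_Icc_self

lemma Ico_nd_subset (n k : ℕ) : Ico (nd n k) (nd n (k+1)) ⊆ Icc (0:ℝ) 1 :=
  fun y hy => ⟨le_trans (nd_nonneg n k) hy.1, le_trans hy.2.le (nd_le_one n (k+1))⟩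

lemma nd_dist (n k : ℕ) (hk : k ≤ 2 ^ n) {x : ℝ} (hx : x ∈ Ico (nd n k) (nd n (k + 1))) :
    |x - (k:ℝ) / 2 ^ n| ≤ 1 / (2 * 2 ^ n) := by
  have h2 : (0:ℝ) < 2 ^ n := two_pow_pos n
  have hlo : (2 * (k:ℝ) - 1) / (2 * 2 ^ n) ≤ x := le_trans (t_le_nd n k hk) hx.1
  have hhi : x < (2 * ((k+1:ℕ):ℝ) - 1) / (2 * 2 ^ n) :=
    lt_of_lt_of_le hx.2 (nd_le_t n (k+1) (by omega))
  have e0 : (k:ℝ) / 2 ^ n = 2 * (k:ℝ) / (2 * 2 ^ n) := by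
    field_simp
  have e1 : (2 * (k:ℝ) - 1) / (2 * 2 ^ n) = 2 * (k:ℝ) / (2 * 2 ^ n) - 1 / (2 * 2 ^ n) := by
    ring
  have e2 : (2 * ((k+1:ℕ):ℝ) - 1) / (2 * 2 ^ n) = 2 * (k:ℝ) / (2 * 2 ^ n) + 1 / (2 * 2 ^ n) := by
    push_cast
    ring
  rw [abs_le]
  rw [e1] at hlo
  rw [e2] at hhi
  rw [e0]
  constructor <;> linarith

/-- the dominating kernel bound -/
noncomputable def Bnd (s : ℝ) (n k l : ℕ) (x : ℝ) : ℝ :=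
  if k = l then 0
  else if l = k + 1 then (nd n (k+1) - x) ^ (-(2*s)) / (2*s)
  else if k = l + 1 then (x - nd n k) ^ (-(2*s)) / (2*s)
  else 4 * dyadicMu n l * |(k:ℝ)/2^n - (l:ℝ)/2^n| ^ (-(1+2*s))

lemma Bnd_nonneg (hs : 0 < s) (n k l : ℕ) {x : ℝ}
    (hx : x ∈ Ico (nd n k) (nd n (k+1))) : 0 ≤ Bnd s n k l x := by
  rw [Bnd]
  split
  · exact le_refl 0
  split
  · exact div_nonneg (rpow_nonneg (by linarith [hx.2]) _) (by linarith)
  split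
  · exact div_nonneg (rpow_nonneg (by linarith [hx.1]) _) (by linarith)
  · have := dyadicMu_pos n l
    have := rpow_nonneg (abs_nonneg ((k:ℝ)/2^n - (l:ℝ)/2^n)) (-(1+2*s))
    nlinarith

lemma sep_of_nonadj (n k l : ℕ) (hk : k ≤ 2 ^ n) (hl : l ≤ 2 ^ n)
    (h1 : k ≠ l) (h2 : l ≠ k + 1) (h3 : k ≠ l + 1) {x y : ℝ}
    (hx : x ∈ Ico (nd n k) (nd n (k+1))) (hy : y ∈ Ico (nd n l) (nd n (l+1))) :
    |(k:ℝ)/2^n - (l:ℝ)/2^n| / 2 ≤ |x - y| := by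
  have hp : (0:ℝ) < 2 ^ n := two_pow_pos n
  have hdx := nd_dist n k hk hx
  have hdy := nd_dist n l hl hy
  have hsep : 2 / (2:ℝ) ^ n ≤ |(k:ℝ)/2^n - (l:ℝ)/2^n| := by
    have h4 : (2:ℝ) ≤ |(k:ℝ) - (l:ℝ)| := by
      have : k + 2 ≤ l ∨ l + 2 ≤ k := by omega
      rcases this with h | h
      · have : (k:ℝ) + 2 ≤ (l:ℝ) := by exact_mod_cast h
        rw [abs_sub_comm, abs_of_nonneg (by linarith)]; linarith
      · have : (l:ℝ) + 2 ≤ (k:ℝ) := by exact_mod_cast h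
        rw [abs_of_nonneg (by linarith)]; linarith
    have e : (k:ℝ)/2^n - (l:ℝ)/2^n = ((k:ℝ) - (l:ℝ))/2^n := by ring
    rw [e, abs_div, abs_of_pos hp, div_le_div_iff₀ (by norm_num) hp] at *
    nlinarith [h4]
  have tri : |(k:ℝ)/2^n - (l:ℝ)/2^n| ≤ |x - y| + |x - (k:ℝ)/2^n| + |y - (l:ℝ)/2^n| := by
    have t1 := abs_sub_abs_le_abs_sub ((k:ℝ)/2^n - (l:ℝ)/2^n) 0
    calc |(k:ℝ)/2^n - (l:ℝ)/2^n|
        = |((k:ℝ)/2^n - x) + (x - y) + (y - (l:ℝ)/2^n)| := by ring_nf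
      _ ≤ |((k:ℝ)/2^n - x) + (x - y)| + |y - (l:ℝ)/2^n| := abs_add_le _ _
      _ ≤ |(k:ℝ)/2^n - x| + |x - y| + |y - (l:ℝ)/2^n| := by
          have := abs_add_le ((k:ℝ)/2^n - x) (x - y)
          linarith
      _ = |x - y| + |x - (k:ℝ)/2^n| + |y - (l:ℝ)/2^n| := by
          rw [abs_sub_comm ((k:ℝ)/2^n) x]; ring
  have h1n : 1 / (2 * 2^n) + 1/(2 * 2^n) = 1 / (2:ℝ)^n := by field_simp; ring
  have : |(k:ℝ)/2^n - (l:ℝ)/2^n| - 1/(2:ℝ)^n ≤ |x - y| := by linarith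
  have : |(k:ℝ)/2^n - (l:ℝ)/2^n| / 2 ≤ |(k:ℝ)/2^n - (l:ℝ)/2^n| - 1/(2:ℝ)^n := by
    have e : 2/(2:ℝ)^n = 2 * (1/(2:ℝ)^n) := by ring
    rw [e] at hsep
    linarith
  linarith

lemma abs_pos_of_sep (n k l : ℕ) (h1 : k ≠ l) : 0 < |(k:ℝ)/2^n - (l:ℝ)/2^n| := by
  have hp : (0:ℝ) < 2 ^ n := two_pow_pos n
  rw [abs_pos, sub_ne_zero]
  intro h
  apply h1
  have : (k:ℝ) = l := by
    field_simp at h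
    exact_mod_cast h
  exact_mod_cast this

lemma two_rpow_le_four (hs2 : s < 1/2) : (2:ℝ) ^ (1 + 2*s) ≤ 4 := by
  have h4 : (2:ℝ) ^ ((2:ℕ):ℝ) = 4 := by rw [Real.rpow_natCast]; norm_num
  calc (2:ℝ) ^ (1 + 2*s) ≤ (2:ℝ) ^ ((2:ℕ):ℝ) :=
    rpow_le_rpow_of_exponent_le one_le_two (by push_cast; linarith)
  _ = 4 := h4

lemma W_le_Bnd (hs : 0 < s) (hs2 : s < 1/2) (n k l : ℕ) (hk : k ≤ 2 ^ n) (hl : l ≤ 2 ^ n)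
    (hkl : k ≠ l) {x : ℝ} (hx : x ∈ Ioo (nd n k) (nd n (k+1))) :
    ∫ y in Ico (nd n l) (nd n (l+1)), |x - y| ^ (-(1 + 2 * s)) ≤ Bnd s n k l x := by
  have hxI : x ∈ Ico (nd n k) (nd n (k+1)) := ⟨hx.1.le, hx.2⟩
  have hmono : nd n l ≤ nd n (l+1) := nd_mono n (by omega)
  rcases eq_or_ne l (k+1) with rfl | hadj1
  · rw [Bnd, if_neg hkl, if_pos rfl]
    exact int_right hs hx.2 hmono
  rcases eq_or_ne k (l+1) with rfl | hadj2
  · rw [Bnd, if_neg hkl, if_neg hadj1, if_pos rfl]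
    exact int_left hs hx.1 hmono
  · rw [Bnd, if_neg hkl, if_neg hadj1, if_neg hadj2]
    set D := |(k:ℝ)/2^n - (l:ℝ)/2^n| with hD
    have hDpos : 0 < D := abs_pos_of_sep n k l hkl
    have hd : 0 < D / 2 := by linarith
    have hsep : ∀ y ∈ Ico (nd n l) (nd n (l+1)), D / 2 ≤ |x - y| :=
      fun y hy => sep_of_nonadj n k l hk hl hkl hadj1 hadj2 hxI hy
    calc ∫ y in Ico (nd n l) (nd n (l+1)), |x - y| ^ (-(1 + 2 * s))
        ≤ (nd n (l+1) - nd n l) * (D/2) ^ (-(1 + 2 * s)) := int_flat hs hd hmono hsep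
      _ = dyadicMu n l * (D/2) ^ (-(1 + 2 * s)) := by rw [mu_eq n l hl]
      _ ≤ 4 * dyadicMu n l * D ^ (-(1+2*s)) := by
          have hmu := dyadicMu_pos n l
          have e : (D/2) ^ (-(1 + 2 * s)) = D ^ (-(1+2*s)) * (2:ℝ) ^ (1 + 2*s) := by
            rw [div_rpow hDpos.le (by norm_num : (0:ℝ) ≤ 2)]
            rw [Real.rpow_neg (by norm_num : (0:ℝ) ≤ 2), div_inv_eq_mul]
          rw [e]
          have h4 := two_rpow_le_four hs2
          have hDn : 0 ≤ D ^ (-(1+2*s)) := rpow_nonneg hDpos.le _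
          nlinarith [mul_le_mul_of_nonneg_left h4 (mul_nonneg hmu.le hDn)]

lemma integrableOn_ker_I (hs : 0 < s) (n k l : ℕ) (hkl : k ≠ l) {x : ℝ}
    (hx : x ∈ Ioo (nd n k) (nd n (k+1))) :
    IntegrableOn (fun y => |x - y| ^ (-(1 + 2 * s))) (Ico (nd n l) (nd n (l+1))) volume := by
  rcases Nat.lt_or_ge k l with h | h
  · -- x < nd n l
    have hxl : x < nd n l := lt_of_lt_of_le hx.2 (nd_mono n h)
    exact integrableOn_ker hs (d := nd n l - x) (by linarith)
      (fun y hy => by rw [abs_sub_comm, abs_of_pos (by linarith [hy.1])]; linarith [hy.1])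
  · have h' : l + 1 ≤ k := by omega
    have hxl : nd n (l+1) < x := lt_of_le_of_lt (nd_mono n h') hx.1
    exact integrableOn_ker hs (d := x - nd n (l+1)) (by linarith)
      (fun y hy => by rw [abs_of_pos (by linarith [hy.2])]; linarith [hy.2])

lemma Bnd_integrableOn (hs : 0 < s) (hs2 : s < 1/2) (n k l : ℕ) :
    IntegrableOn (Bnd s n k l) (Ico (nd n k) (nd n (k+1))) volume := by
  have hmono : nd n k ≤ nd n (k+1) := nd_mono n (by omega)
  rcases eq_or_ne k l with rfl | hkl
  · rw [show Bnd s n k k = fun _ => (0:ℝ) from funext fun x => by rw [Bnd, if_pos rfl]]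
    exact integrableOn_zero
  rcases eq_or_ne l (k+1) with rfl | hadj1
  · rw [show Bnd s n k (k+1) = fun x => (nd n (k+1) - x) ^ (-(2*s)) / (2*s) from
      funext fun x => by rw [Bnd, if_neg hkl, if_pos rfl]]
    exact (integrableOn_mid_right hs hs2 hmono).div_const _
  rcases eq_or_ne k (l+1) with rfl | hadj2
  · rw [show Bnd s n (l+1) l = fun x => (x - nd n (l+1)) ^ (-(2*s)) / (2*s) from
      funext fun x => by rw [Bnd, if_neg hkl, if_neg hadj1, if_pos rfl]]
    exact (integrableOn_mid_left hs hs2 hmono).div_const _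
  · rw [show Bnd s n k l = fun _ => 4 * dyadicMu n l * |(k:ℝ)/2^n - (l:ℝ)/2^n| ^ (-(1+2*s)) from
      funext fun x => by rw [Bnd, if_neg hkl, if_neg hadj1, if_neg hadj2]]
    exact integrableOn_const measure_Ico_lt_top.ne

lemma adj_abs (n k : ℕ) : |(k:ℝ)/2^n - ((k+1:ℕ):ℝ)/2^n| = ((2:ℝ)^n)⁻¹ := by
  have hp : (0:ℝ) < 2 ^ n := two_pow_pos n
  push_cast
  rw [show (k:ℝ)/2^n - ((k:ℝ)+1)/2^n = -(1/2^n) by ring, abs_neg,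
    abs_of_pos (by positivity), one_div]

lemma Bnd_int_le (hs : 0 < s) (hs2 : s < 1/2) (n k l : ℕ) (hk : k ≤ 2 ^ n) (hl : l ≤ 2 ^ n) :
    ∫ x in Ico (nd n k) (nd n (k+1)), Bnd s n k l x
      ≤ (2/(s*(1-2*s))) * (|(k:ℝ)/2^n - (l:ℝ)/2^n| ^ (-(1+2*s)) * dyadicMu n k * dyadicMu n l) := by
  have hp : (0:ℝ) < 2 ^ n := two_pow_pos n
  have hmono : nd n k ≤ nd n (k+1) := nd_mono n (by omega)
  have hC : (0:ℝ) < 2/(s*(1-2*s)) := by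
    apply div_pos (by norm_num)
    nlinarith
  have hmu_k := dyadicMu_pos n k
  have hmu_l := dyadicMu_pos n l
  set h : ℝ := ((2:ℝ)^n)⁻¹ with hh
  have hhpos : 0 < h := by positivity
  have hmuk_le : dyadicMu n k ≤ h := dyadicMu_le n k
  have hmuk_ge : h ≤ 2 * dyadicMu n k := inv_le_two_dyadicMu n k
  have hmul_ge : h ≤ 2 * dyadicMu n l := inv_le_two_dyadicMu n l
  -- key rpow identity
  have e1 : h ^ (-(1+2*s)) * (h*h) = h^(1-2*s) := by
    rw [show h*h = h^((2:ℕ):ℝ) by rw [Real.rpow_natCast]; ring]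
    rw [← Real.rpow_add hhpos]
    rw [show -(1+2*s) + ((2:ℕ):ℝ) = 1-2*s by push_cast; ring]
  have hhp : 0 < h ^ (-(1+2*s)) := rpow_pos_of_pos hhpos _
  rcases eq_or_ne k l with rfl | hkl
  · rw [show (fun x => Bnd s n k k x) = fun _ => (0:ℝ) from funext fun x => by rw [Bnd, if_pos rfl]]
    rw [integral_zero]
    positivity
  rcases eq_or_ne l (k+1) with rfl | hadj1
  · rw [show (fun x => Bnd s n k (k+1) x) = fun x => (nd n (k+1) - x) ^ (-(2*s)) / (2*s) from
      funext fun x => by rw [Bnd, if_neg hkl, if_pos rfl]]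
    rw [adj_abs n k, ← hh]
    rw [integral_div, int_mid_right hs hs2 hmono, mu_eq n k hk]
    -- LHS = μ_k^{1-2s}/(1-2s)/(2s)
    have hle : (dyadicMu n k) ^ (1-2*s) ≤ h ^ (1-2*s) :=
      rpow_le_rpow hmu_k.le hmuk_le (by linarith)
    have hfinal : h^(1-2*s)/(1-2*s)/(2*s)
        = (2/(s*(1-2*s))) * (h ^ (-(1+2*s)) * (h/2) * (h/2)) := by
      rw [show h ^ (-(1+2*s)) * (h/2) * (h/2) = h ^ (-(1+2*s)) * (h*h) / 4 by ring, e1]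
      have hs0 : s ≠ 0 := ne_of_gt hs
      have h12 : (1:ℝ)-2*s ≠ 0 := ne_of_gt (by linarith)
      field_simp
      ring
    calc dyadicMu n k ^ (1-2*s)/(1-2*s)/(2*s) ≤ h^(1-2*s)/(1-2*s)/(2*s) := by
          gcongr <;> linarith
      _ = (2/(s*(1-2*s))) * (h ^ (-(1+2*s)) * (h/2) * (h/2)) := hfinal
      _ ≤ (2/(s*(1-2*s))) * (h ^ (-(1+2*s)) * dyadicMu n k * dyadicMu n (k+1)) := by
          gcongr <;> linarith
  rcases eq_or_ne k (l+1) with rfl | hadj2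
  · rw [show (fun x => Bnd s n (l+1) l x) = fun x => (x - nd n (l+1)) ^ (-(2*s)) / (2*s) from
      funext fun x => by rw [Bnd, if_neg hkl, if_neg hadj1, if_pos rfl]]
    have habs : |((l+1:ℕ):ℝ)/2^n - (l:ℝ)/2^n| = h := by
      rw [abs_sub_comm]; exact adj_abs n l
    rw [habs]
    rw [integral_div, int_mid_left hs hs2 hmono, mu_eq n (l+1) hk]
    have hle : (dyadicMu n (l+1)) ^ (1-2*s) ≤ h ^ (1-2*s) :=
      rpow_le_rpow (dyadicMu_pos n (l+1)).le (dyadicMu_le n (l+1)) (by linarith)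
    have hfinal : h^(1-2*s)/(1-2*s)/(2*s)
        = (2/(s*(1-2*s))) * (h ^ (-(1+2*s)) * (h/2) * (h/2)) := by
      rw [show h ^ (-(1+2*s)) * (h/2) * (h/2) = h ^ (-(1+2*s)) * (h*h) / 4 by ring, e1]
      have hs0 : s ≠ 0 := ne_of_gt hs
      have h12 : (1:ℝ)-2*s ≠ 0 := ne_of_gt (by linarith)
      field_simp
      ring
    calc dyadicMu n (l+1) ^ (1-2*s)/(1-2*s)/(2*s) ≤ h^(1-2*s)/(1-2*s)/(2*s) := by
          gcongr <;> linarith [dyadicMu_pos n (l+1)]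
      _ = (2/(s*(1-2*s))) * (h ^ (-(1+2*s)) * (h/2) * (h/2)) := hfinal
      _ ≤ (2/(s*(1-2*s))) * (h ^ (-(1+2*s)) * dyadicMu n (l+1) * dyadicMu n l) := by
          gcongr <;> linarith [inv_le_two_dyadicMu n (l+1)]
  · rw [show (fun x => Bnd s n k l x) = fun _ => 4 * dyadicMu n l * |(k:ℝ)/2^n - (l:ℝ)/2^n| ^ (-(1+2*s)) from
      funext fun x => by rw [Bnd, if_neg hkl, if_neg hadj1, if_neg hadj2]]
    rw [setIntegral_const, measureReal_def, Real.volume_Ico, smul_eq_mul,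
      ENNReal.toReal_ofReal (by linarith), mu_eq n k hk]
    have hDn : 0 ≤ |(k:ℝ)/2^n - (l:ℝ)/2^n| ^ (-(1+2*s)) := rpow_nonneg (abs_nonneg _) _
    have h44 : (4:ℝ) ≤ 2/(s*(1-2*s)) := by
      rw [le_div_iff₀ (by nlinarith)]
      nlinarith
    calc dyadicMu n k * (4 * dyadicMu n l * |(k:ℝ)/2^n - (l:ℝ)/2^n| ^ (-(1+2*s)))
        = 4 * (|(k:ℝ)/2^n - (l:ℝ)/2^n| ^ (-(1+2*s)) * dyadicMu n k * dyadicMu n l) := by ring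
      _ ≤ (2/(s*(1-2*s))) * (|(k:ℝ)/2^n - (l:ℝ)/2^n| ^ (-(1+2*s)) * dyadicMu n k * dyadicMu n l) := by
          apply mul_le_mul_of_nonneg_right h44
          positivity

lemma restrict_trick (f : ℝ → ℝ) (l : ℕ) (hsub : Ico (nd n l) (nd n (l+1)) ⊆ Icc (0:ℝ) 1)
    (h : IntegrableOn f (Ico (nd n l) (nd n (l+1))) volume) :
    IntegrableOn f (Ico (nd n l) (nd n (l+1))) (volume.restrict (Icc (0:ℝ) 1)) := by
  rw [IntegrableOn, Measure.restrict_restrict measurableSet_Ico, Set.inter_eq_left.mpr hsub]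
  exact h

lemma inner_bound (hs : 0 < s) (hs2 : s < 1/2) (n : ℕ) (u : ℝ → ℝ) (k : ℕ) (hk : k ≤ 2 ^ n)
    {x : ℝ} (hx : x ∈ Ioo (nd n k) (nd n (k+1))) :
    ∫ y in Icc (0:ℝ) 1, (extOp n u x - extOp n u y) ^ 2 * |x - y| ^ (-(1 + 2 * s))
      ≤ ∑ l ∈ Finset.range (2 ^ n + 1),
          (u ((k:ℝ) / 2 ^ n) - u ((l:ℝ) / 2 ^ n)) ^ 2 * Bnd s n k l x := by
  have hxI : x ∈ Ico (nd n k) (nd n (k+1)) := ⟨hx.1.le, hx.2⟩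
  have hext : extOp n u x = u ((k:ℝ) / 2 ^ n) := ext_eq_nd n k u hk hxI
  set g : ℝ → ℝ := fun y => ∑ l ∈ Finset.range (2 ^ n + 1),
    (u ((k:ℝ) / 2 ^ n) - u ((l:ℝ) / 2 ^ n)) ^ 2
      * (Ico (nd n l) (nd n (l+1))).indicator (fun y => |x - y| ^ (-(1 + 2 * s))) y with hg
  have hterm : ∀ l ∈ Finset.range (2 ^ n + 1), Integrable
      (fun y => (u ((k:ℝ) / 2 ^ n) - u ((l:ℝ) / 2 ^ n)) ^ 2
        * (Ico (nd n l) (nd n (l+1))).indicator (fun y => |x - y| ^ (-(1 + 2 * s))) y)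
      (volume.restrict (Icc (0:ℝ) 1)) := by
    intro l hl
    rcases eq_or_ne l k with rfl | hlk
    · simp only [sub_self, ne_eq, OfNat.ofNat_ne_zero, not_false_eq_true, zero_pow, zero_mul]
      exact integrable_zero _ _ _
    · apply Integrable.const_mul
      apply IntegrableOn.integrable_indicator _ measurableSet_Ico
      exact restrict_trick _ l (Ico_nd_subset n l)
        (integrableOn_ker_I hs n k l (Ne.symm hlk) hx)
  have hgi : Integrable g (volume.restrict (Icc (0:ℝ) 1)) := by
    rw [hg]
    exact integrable_finset_sum _ hterm
  have hmono : ∀ᵐ y ∂(volume.restrict (Icc (0:ℝ) 1)),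
      (extOp n u x - extOp n u y) ^ 2 * |x - y| ^ (-(1 + 2 * s)) ≤ g y := by
    filter_upwards [ae_good n] with y hy
    obtain ⟨l, hl, hyI⟩ := exists_Ico n hy.1
    have hmem : l ∈ Finset.range (2 ^ n + 1) := Finset.mem_range.mpr (by omega)
    have hval : (extOp n u x - extOp n u y) ^ 2 * |x - y| ^ (-(1 + 2 * s))
        = (u ((k:ℝ) / 2 ^ n) - u ((l:ℝ) / 2 ^ n)) ^ 2
          * (Ico (nd n l) (nd n (l+1))).indicator (fun y => |x - y| ^ (-(1 + 2 * s))) y := by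
      rw [hext, ext_eq_nd n l u hl hyI, indicator_of_mem hyI]
    rw [hval]
    apply Finset.single_le_sum (f := fun (l : ℕ) => (u ((k:ℝ) / 2 ^ n) - u ((l:ℝ) / 2 ^ n)) ^ 2
      * (Ico (nd n l) (nd n (l+1))).indicator (fun y => |x - y| ^ (-(1 + 2 * s))) y) _ hmem
    intro i _
    exact mul_nonneg (sq_nonneg _) (indicator_nonneg (fun z _ => ker_nonneg x z s) y)
  calc ∫ y in Icc (0:ℝ) 1, (extOp n u x - extOp n u y) ^ 2 * |x - y| ^ (-(1 + 2 * s))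
      ≤ ∫ y in Icc (0:ℝ) 1, g y := integral_mono_of_nonneg
        (ae_of_all _ fun y => mul_nonneg (sq_nonneg _) (ker_nonneg x y s)) hgi hmono
    _ = ∑ l ∈ Finset.range (2 ^ n + 1), (u ((k:ℝ) / 2 ^ n) - u ((l:ℝ) / 2 ^ n)) ^ 2
          * ∫ y in Ico (nd n l) (nd n (l+1)), |x - y| ^ (-(1 + 2 * s)) := by
        rw [hg, integral_finset_sum _ hterm]
        apply Finset.sum_congr rfl
        intro l _
        rw [integral_const_mul, integral_indicator measurableSet_Ico,
          Measure.restrict_restrict measurableSet_Ico,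
          Set.inter_eq_left.mpr (Ico_nd_subset n l)]
    _ ≤ ∑ l ∈ Finset.range (2 ^ n + 1),
          (u ((k:ℝ) / 2 ^ n) - u ((l:ℝ) / 2 ^ n)) ^ 2 * Bnd s n k l x := by
        apply Finset.sum_le_sum
        intro l hl
        rcases eq_or_ne k l with rfl | hkl
        · simp only [sub_self, ne_eq, OfNat.ofNat_ne_zero, not_false_eq_true, zero_pow, zero_mul]
          exact le_refl 0
        · exact mul_le_mul_of_nonneg_left
            (W_le_Bnd hs hs2 n k l hk (by have := Finset.mem_range.mp hl; omega) hkl hx)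
            (sq_nonneg _)

lemma outer_bound (hs : 0 < s) (hs2 : s < 1/2) (n : ℕ) (u : ℝ → ℝ) :
    (∫ x in Icc (0:ℝ) 1, ∫ y in Icc (0:ℝ) 1,
        (extOp n u x - extOp n u y) ^ 2 * |x - y| ^ (-(1 + 2 * s)))
      ≤ ∑ k ∈ Finset.range (2 ^ n + 1), ∑ l ∈ Finset.range (2 ^ n + 1),
          (u ((k:ℝ) / 2 ^ n) - u ((l:ℝ) / 2 ^ n)) ^ 2
            * ((2/(s*(1-2*s))) * (|(k:ℝ)/2^n - (l:ℝ)/2^n| ^ (-(1+2*s))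
                * dyadicMu n k * dyadicMu n l)) := by
  set G : ℝ → ℝ := fun x => ∑ k ∈ Finset.range (2 ^ n + 1),
    (Ico (nd n k) (nd n (k+1))).indicator
      (fun x => ∑ l ∈ Finset.range (2 ^ n + 1),
        (u ((k:ℝ) / 2 ^ n) - u ((l:ℝ) / 2 ^ n)) ^ 2 * Bnd s n k l x) x with hG
  have hIN : ∀ k l : ℕ, IntegrableOn
      (fun x => (u ((k:ℝ) / 2 ^ n) - u ((l:ℝ) / 2 ^ n)) ^ 2 * Bnd s n k l x)
      (Ico (nd n k) (nd n (k+1))) volume :=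
    fun k l => (Bnd_integrableOn hs hs2 n k l).const_mul _
  have hterm : ∀ k ∈ Finset.range (2 ^ n + 1), Integrable
      ((Ico (nd n k) (nd n (k+1))).indicator
        (fun x => ∑ l ∈ Finset.range (2 ^ n + 1),
          (u ((k:ℝ) / 2 ^ n) - u ((l:ℝ) / 2 ^ n)) ^ 2 * Bnd s n k l x))
      (volume.restrict (Icc (0:ℝ) 1)) := by
    intro k _
    apply IntegrableOn.integrable_indicator _ measurableSet_Ico
    apply restrict_trick _ k (Ico_nd_subset n k)
    exact integrable_finset_sum _ (fun l _ => hIN k l)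
  have hGi : Integrable G (volume.restrict (Icc (0:ℝ) 1)) := by
    rw [hG]; exact integrable_finset_sum _ hterm
  have hfG : ∀ᵐ x ∂(volume.restrict (Icc (0:ℝ) 1)),
      (∫ y in Icc (0:ℝ) 1, (extOp n u x - extOp n u y) ^ 2 * |x - y| ^ (-(1 + 2 * s))) ≤ G x := by
    filter_upwards [ae_good n] with x hxg
    obtain ⟨k, hk, hxIoo⟩ := exists_Ioo n hxg.1 hxg.2
    have hxIco : x ∈ Ico (nd n k) (nd n (k+1)) := ⟨hxIoo.1.le, hxIoo.2⟩
    calc (∫ y in Icc (0:ℝ) 1, (extOp n u x - extOp n u y) ^ 2 * |x - y| ^ (-(1 + 2 * s)))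
        ≤ ∑ l ∈ Finset.range (2 ^ n + 1),
            (u ((k:ℝ) / 2 ^ n) - u ((l:ℝ) / 2 ^ n)) ^ 2 * Bnd s n k l x :=
          inner_bound hs hs2 n u k hk hxIoo
      _ = (Ico (nd n k) (nd n (k+1))).indicator
            (fun x => ∑ l ∈ Finset.range (2 ^ n + 1),
              (u ((k:ℝ) / 2 ^ n) - u ((l:ℝ) / 2 ^ n)) ^ 2 * Bnd s n k l x) x :=
          (indicator_of_mem hxIco (fun z => ∑ l ∈ Finset.range (2 ^ n + 1),
            (u ((k:ℝ) / 2 ^ n) - u ((l:ℝ) / 2 ^ n)) ^ 2 * Bnd s n k l z)).symm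
      _ ≤ G x := by
          apply Finset.single_le_sum (f := fun (j : ℕ) => (Ico (nd n j) (nd n (j+1))).indicator
            (fun x => ∑ l ∈ Finset.range (2 ^ n + 1),
              (u ((j:ℝ) / 2 ^ n) - u ((l:ℝ) / 2 ^ n)) ^ 2 * Bnd s n j l x) x)
            _ (Finset.mem_range.mpr (by omega))
          intro i _
          apply indicator_nonneg
          intro z hz
          exact Finset.sum_nonneg fun l _ =>
            mul_nonneg (sq_nonneg _) (Bnd_nonneg hs n i l hz)
  calc (∫ x in Icc (0:ℝ) 1, ∫ y in Icc (0:ℝ) 1,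
        (extOp n u x - extOp n u y) ^ 2 * |x - y| ^ (-(1 + 2 * s)))
      ≤ ∫ x in Icc (0:ℝ) 1, G x := integral_mono_of_nonneg
        (ae_of_all _ fun x => integral_nonneg
          (fun y => mul_nonneg (sq_nonneg _) (ker_nonneg x y s))) hGi hfG
    _ = ∑ k ∈ Finset.range (2 ^ n + 1), ∫ x in Ico (nd n k) (nd n (k+1)),
          ∑ l ∈ Finset.range (2 ^ n + 1),
            (u ((k:ℝ) / 2 ^ n) - u ((l:ℝ) / 2 ^ n)) ^ 2 * Bnd s n k l x := by
        rw [hG, integral_finset_sum _ hterm]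
        apply Finset.sum_congr rfl
        intro k _
        rw [integral_indicator measurableSet_Ico,
          Measure.restrict_restrict measurableSet_Ico,
          Set.inter_eq_left.mpr (Ico_nd_subset n k)]
    _ = ∑ k ∈ Finset.range (2 ^ n + 1), ∑ l ∈ Finset.range (2 ^ n + 1),
          (u ((k:ℝ) / 2 ^ n) - u ((l:ℝ) / 2 ^ n)) ^ 2
            * ∫ x in Ico (nd n k) (nd n (k+1)), Bnd s n k l x := by
        apply Finset.sum_congr rfl
        intro k _
        rw [integral_finset_sum _ (fun l _ => hIN k l)]
        exact Finset.sum_congr rfl fun l _ => integral_const_mul _ _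
    _ ≤ _ := by
        apply Finset.sum_le_sum
        intro k hk
        apply Finset.sum_le_sum
        intro l hl
        exact mul_le_mul_of_nonneg_left
          (Bnd_int_le hs hs2 n k l
            (by have := Finset.mem_range.mp hk; omega)
            (by have := Finset.mem_range.mp hl; omega))
          (sq_nonneg _)

end Stmt13

theorem stmt13 (s : ℝ) (hs : 0 < s) (hs2 : s < 1 / 2) :
    ∃ c : ℝ, 0 < c ∧ ∀ lam : ℝ, 0 < lam → ∀ (n : ℕ) (j : ℕ → ℝ → ℝ → ℝ),
      (∀ k ∈ Finset.range (2 ^ n + 1), ∀ l ∈ Finset.range (2 ^ n + 1), k ≠ l →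
        lam * |(k : ℝ) / 2 ^ n - (l : ℝ) / 2 ^ n| ^ (-(1 + 2 * s))
          ≤ j n ((k : ℝ) / 2 ^ n) ((l : ℝ) / 2 ^ n)) →
      ∀ u : ℝ → ℝ,
        c * lam * (∫ x in Set.Icc (0 : ℝ) 1, ∫ y in Set.Icc (0 : ℝ) 1,
            (extOp n u x - extOp n u y) ^ 2 * |x - y| ^ (-(1 + 2 * s)))
          ≤ discreteEnergy j u n := by
  have hc : 0 < s * (1 - 2*s) / 2 := by nlinarith
  refine ⟨s * (1 - 2*s) / 2, hc, ?_⟩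
  intro lam hlam n j hj u
  have houter := Stmt13.outer_bound hs hs2 n u
  have hs0 : s ≠ 0 := ne_of_gt hs
  have h12 : (1:ℝ) - 2*s ≠ 0 := ne_of_gt (by linarith)
  calc s * (1 - 2*s) / 2 * lam * (∫ x in Set.Icc (0 : ℝ) 1, ∫ y in Set.Icc (0 : ℝ) 1,
          (extOp n u x - extOp n u y) ^ 2 * |x - y| ^ (-(1 + 2 * s)))
      ≤ s * (1 - 2*s) / 2 * lam * ∑ k ∈ Finset.range (2 ^ n + 1), ∑ l ∈ Finset.range (2 ^ n + 1),
          (u ((k:ℝ) / 2 ^ n) - u ((l:ℝ) / 2 ^ n)) ^ 2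
            * ((2/(s*(1-2*s))) * (|(k:ℝ)/2^n - (l:ℝ)/2^n| ^ (-(1+2*s))
                * dyadicMu n k * dyadicMu n l)) := by
        apply mul_le_mul_of_nonneg_left houter (by positivity)
    _ = ∑ k ∈ Finset.range (2 ^ n + 1), ∑ l ∈ Finset.range (2 ^ n + 1),
          s * (1 - 2*s) / 2 * lam * ((u ((k:ℝ) / 2 ^ n) - u ((l:ℝ) / 2 ^ n)) ^ 2
            * ((2/(s*(1-2*s))) * (|(k:ℝ)/2^n - (l:ℝ)/2^n| ^ (-(1+2*s))
                * dyadicMu n k * dyadicMu n l))) := by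
        rw [Finset.mul_sum]
        exact Finset.sum_congr rfl fun k _ => Finset.mul_sum _ _ _
    _ ≤ discreteEnergy j u n := by
        rw [discreteEnergy]
        apply Finset.sum_le_sum
        intro k hk
        apply Finset.sum_le_sum
        intro l hl
        rcases eq_or_ne k l with rfl | hkl
        · simp only [sub_self, ne_eq, OfNat.ofNat_ne_zero, not_false_eq_true, zero_pow,
            zero_mul, mul_zero]
          exact le_refl 0
        · have hj' := hj k hk l hl hkl
          have h1 : (0:ℝ) ≤ (u ((k:ℝ) / 2 ^ n) - u ((l:ℝ) / 2 ^ n)) ^ 2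
              * (dyadicMu n k * dyadicMu n l) :=
            mul_nonneg (sq_nonneg _)
              (mul_nonneg (Stmt13.dyadicMu_pos n k).le (Stmt13.dyadicMu_pos n l).le)
          calc s * (1 - 2*s) / 2 * lam * ((u ((k:ℝ) / 2 ^ n) - u ((l:ℝ) / 2 ^ n)) ^ 2
                * ((2/(s*(1-2*s))) * (|(k:ℝ)/2^n - (l:ℝ)/2^n| ^ (-(1+2*s))
                    * dyadicMu n k * dyadicMu n l)))
              = (lam * |(k:ℝ)/2^n - (l:ℝ)/2^n| ^ (-(1+2*s)))
                * ((u ((k:ℝ) / 2 ^ n) - u ((l:ℝ) / 2 ^ n)) ^ 2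
                  * (dyadicMu n k * dyadicMu n l)) := by
                have e : s * (1 - 2*s) / 2 * (2/(s*(1-2*s))) = 1 := by
                  rw [div_mul_div_comm, mul_comm 2 (s*(1-2*s))]
                  exact div_self (mul_ne_zero (mul_ne_zero hs0 h12) two_ne_zero)
                linear_combination (lam * (u ((k:ℝ) / 2 ^ n) - u ((l:ℝ) / 2 ^ n)) ^ 2
                  * |(k:ℝ)/2^n - (l:ℝ)/2^n| ^ (-(1+2*s)) * dyadicMu n k * dyadicMu n l) * e
            _ ≤ j n ((k:ℝ)/2^n) ((l:ℝ)/2^n)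
                * ((u ((k:ℝ) / 2 ^ n) - u ((l:ℝ) / 2 ^ n)) ^ 2
                  * (dyadicMu n k * dyadicMu n l)) :=
                mul_le_mul_of_nonneg_right hj' h1
            _ = (u ((k:ℝ) / 2 ^ n) - u ((l:ℝ) / 2 ^ n)) ^ 2
                * j n ((k:ℝ)/2^n) ((l:ℝ)/2^n) * dyadicMu n k * dyadicMu n l := by
                ring
end

section
/- Fix i_0 > 2 and suppose u is continuous on [0, 1/i_0] ∪ [1 - 1/i_0, 1]. Under the kernel bounds λ_i(y-x)^{-(1+2s)} ≤ j_i^(n)(x,y) ≤ Λ_i(y-x)^{-(1+2s)} with λ_i/i^2 → 1 and Λ_i/i^2 → 1, for fixed n one has lim_{i→∞} 2 ∑_{x ∈ V_{i-}^(n)} ∑_{y ∈ V_{i+}^(n)} (u(x)-u(y))^2 j_i^(n)(x,y) μ_i^(n)(x) μ_i^(n)(y) = 2(u(0) - u(1))^2. -/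
open Filter

private lemma aux_tendsto_zero (k n : ℕ) :
    Tendsto (fun i : ℕ => (k : ℝ) / ((i : ℝ) * 2 ^ n)) atTop (nhds 0) := by
  have h1 : Tendsto (fun i : ℕ => ((i : ℝ) * 2 ^ n)) atTop atTop :=
    tendsto_natCast_atTop_atTop.atTop_mul_const (by positivity)
  have h2 := (h1.inv_tendsto_atTop).const_mul (k : ℝ)
  simpa [div_eq_mul_inv] using h2

private lemma aux_ev (k i0 n : ℕ) (hi0 : 0 < i0) :
    ∀ᶠ i : ℕ in atTop, (k : ℝ) / ((i : ℝ) * 2 ^ n) ∈ Set.Icc (0:ℝ) (1 / i0) := by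
  filter_upwards [eventually_ge_atTop (i0 * k + 1)] with i hi
  have hipos : (0:ℝ) < i := by
    have : 0 < i := by omega
    exact_mod_cast this
  constructor
  · positivity
  · rw [div_le_div_iff₀ (by positivity) (by exact_mod_cast hi0)]
    have h2 : (1:ℝ) ≤ 2 ^ n := one_le_pow₀ (by norm_num)
    have h3 : (i0 * k : ℝ) + 1 ≤ i := by exact_mod_cast hi
    have hk : (0:ℝ) ≤ (k:ℝ) := by positivity
    nlinarith

theorem stmt16 (n : ℕ) (s : ℝ) (hs : 0 < s) (hs1 : s < 1)
    (i0 : ℕ) (hi0 : 2 < i0) (u : ℝ → ℝ)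
    (hu : ContinuousOn u
      (Set.Icc (0 : ℝ) (1 / (i0 : ℝ)) ∪ Set.Icc (1 - 1 / (i0 : ℝ)) 1))
    (lam Lam : ℕ → ℝ) (j : ℕ → ℝ → ℝ → ℝ)
    (hbound : ∀ i : ℕ, 2 < i → ∀ k ∈ Finset.range (2 ^ n), ∀ l ∈ Finset.range (2 ^ n),
      lam i * ((1 - (l : ℝ) / ((i : ℝ) * 2 ^ n)) - (k : ℝ) / ((i : ℝ) * 2 ^ n))
          ^ (-(1 + 2 * s))
        ≤ j i ((k : ℝ) / ((i : ℝ) * 2 ^ n)) (1 - (l : ℝ) / ((i : ℝ) * 2 ^ n)) ∧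
      j i ((k : ℝ) / ((i : ℝ) * 2 ^ n)) (1 - (l : ℝ) / ((i : ℝ) * 2 ^ n))
        ≤ Lam i * ((1 - (l : ℝ) / ((i : ℝ) * 2 ^ n)) - (k : ℝ) / ((i : ℝ) * 2 ^ n))
            ^ (-(1 + 2 * s)))
    (hlam : Filter.Tendsto (fun i : ℕ => lam i / (i : ℝ) ^ 2) Filter.atTop (nhds 1))
    (hLam : Filter.Tendsto (fun i : ℕ => Lam i / (i : ℝ) ^ 2) Filter.atTop (nhds 1)) :
    Filter.Tendsto (fun i : ℕ =>
      2 * ∑ k ∈ Finset.range (2 ^ n), ∑ l ∈ Finset.range (2 ^ n),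
        (u ((k : ℝ) / ((i : ℝ) * 2 ^ n)) - u (1 - (l : ℝ) / ((i : ℝ) * 2 ^ n))) ^ 2
          * j i ((k : ℝ) / ((i : ℝ) * 2 ^ n)) (1 - (l : ℝ) / ((i : ℝ) * 2 ^ n))
          * (1 / ((i : ℝ) * 2 ^ n)) * (1 / ((i : ℝ) * 2 ^ n)))
      Filter.atTop (nhds (2 * (u 0 - u 1) ^ 2)) := by
  set S : Set ℝ := Set.Icc (0 : ℝ) (1 / (i0 : ℝ)) ∪ Set.Icc (1 - 1 / (i0 : ℝ)) 1 with hS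
  have hi0pos : (0:ℝ) < i0 := by positivity
  have key : ∀ k ∈ Finset.range (2^n), ∀ l ∈ Finset.range (2^n),
      Tendsto (fun i : ℕ =>
        (u ((k : ℝ) / ((i : ℝ) * 2 ^ n)) - u (1 - (l : ℝ) / ((i : ℝ) * 2 ^ n))) ^ 2
          * j i ((k : ℝ) / ((i : ℝ) * 2 ^ n)) (1 - (l : ℝ) / ((i : ℝ) * 2 ^ n))
          * (1 / ((i : ℝ) * 2 ^ n)) * (1 / ((i : ℝ) * 2 ^ n)))
        atTop (nhds ((u 0 - u 1)^2 * (1/(4:ℝ)^n))) := by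
    intro k hk l hl
    -- x_i → 0 within S, so u x_i → u 0
    have hx0 := aux_tendsto_zero k n
    have hy0 := aux_tendsto_zero l n
    have hux : Tendsto (fun i : ℕ => u ((k : ℝ) / ((i : ℝ) * 2 ^ n))) atTop (nhds (u 0)) := by
      have h0S : (0:ℝ) ∈ S := Or.inl ⟨le_refl _, by positivity⟩
      refine (hu 0 h0S).tendsto.comp ?_
      refine tendsto_nhdsWithin_of_tendsto_nhds_of_eventually_within _ hx0 ?_
      filter_upwards [aux_ev k i0 n (by omega)] with i hi using Or.inl hi
    have huy : Tendsto (fun i : ℕ => u (1 - (l : ℝ) / ((i : ℝ) * 2 ^ n))) atTop (nhds (u 1)) := by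
      have h1S : (1:ℝ) ∈ S := Or.inr ⟨by
        have : (0:ℝ) ≤ 1 / i0 := by positivity
        linarith, le_refl _⟩
      refine (hu 1 h1S).tendsto.comp ?_
      refine tendsto_nhdsWithin_of_tendsto_nhds_of_eventually_within _ ?_ ?_
      · simpa using (tendsto_const_nhds (x := (1:ℝ))).sub hy0
      · filter_upwards [aux_ev l i0 n (by omega)] with i hi
        exact Or.inr ⟨by linarith [hi.2], by linarith [hi.1]⟩
    have hA : Tendsto (fun i : ℕ =>
        (u ((k : ℝ) / ((i : ℝ) * 2 ^ n)) - u (1 - (l : ℝ) / ((i : ℝ) * 2 ^ n))) ^ 2)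
        atTop (nhds ((u 0 - u 1)^2)) := (hux.sub huy).pow 2
    -- d_i → 1
    have hd : Tendsto (fun i : ℕ =>
        (1 - (l : ℝ) / ((i : ℝ) * 2 ^ n)) - (k : ℝ) / ((i : ℝ) * 2 ^ n)) atTop (nhds 1) := by
      have := ((tendsto_const_nhds (x := (1:ℝ))).sub hy0).sub hx0
      simpa using this
    have he : Tendsto (fun i : ℕ =>
        ((1 - (l : ℝ) / ((i : ℝ) * 2 ^ n)) - (k : ℝ) / ((i : ℝ) * 2 ^ n)) ^ (-(1 + 2 * s)))
        atTop (nhds 1) := by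
      have := hd.rpow_const (p := -(1+2*s)) (Or.inl one_ne_zero)
      simpa using this
    -- squeeze for h i := j * c * c
    have hg : Tendsto (fun i : ℕ =>
        j i ((k : ℝ) / ((i : ℝ) * 2 ^ n)) (1 - (l : ℝ) / ((i : ℝ) * 2 ^ n))
          * (1 / ((i : ℝ) * 2 ^ n)) * (1 / ((i : ℝ) * 2 ^ n)))
        atTop (nhds ((1:ℝ)/(4:ℝ)^n)) := by
      have hL : Tendsto (fun i : ℕ => lam i / (i:ℝ)^2
          * ((1 - (l : ℝ) / ((i : ℝ) * 2 ^ n)) - (k : ℝ) / ((i : ℝ) * 2 ^ n)) ^ (-(1 + 2 * s))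
          * ((1:ℝ)/(4:ℝ)^n)) atTop (nhds ((1:ℝ)/(4:ℝ)^n)) := by
        have := (hlam.mul he).mul_const ((1:ℝ)/(4:ℝ)^n)
        simpa using this
      have hU : Tendsto (fun i : ℕ => Lam i / (i:ℝ)^2
          * ((1 - (l : ℝ) / ((i : ℝ) * 2 ^ n)) - (k : ℝ) / ((i : ℝ) * 2 ^ n)) ^ (-(1 + 2 * s))
          * ((1:ℝ)/(4:ℝ)^n)) atTop (nhds ((1:ℝ)/(4:ℝ)^n)) := by
        have := (hLam.mul he).mul_const ((1:ℝ)/(4:ℝ)^n)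
        simpa using this
      refine tendsto_of_tendsto_of_tendsto_of_le_of_le' hL hU ?_ ?_
      · filter_upwards [eventually_gt_atTop 2] with i hi
        obtain ⟨hlow, _⟩ := hbound i hi k hk l hl
        have hipos : (0:ℝ) < i := by exact_mod_cast (by omega : 0 < i)
        have hc : (0:ℝ) ≤ (1 / ((i : ℝ) * 2 ^ n)) * (1 / ((i : ℝ) * 2 ^ n)) := by positivity
        have := mul_le_mul_of_nonneg_right hlow hc
        calc lam i / (i:ℝ)^2
              * ((1 - (l : ℝ) / ((i : ℝ) * 2 ^ n)) - (k : ℝ) / ((i : ℝ) * 2 ^ n)) ^ (-(1 + 2 * s))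
              * ((1:ℝ)/(4:ℝ)^n)
            = lam i * ((1 - (l : ℝ) / ((i : ℝ) * 2 ^ n)) - (k : ℝ) / ((i : ℝ) * 2 ^ n)) ^ (-(1 + 2 * s))
              * ((1 / ((i : ℝ) * 2 ^ n)) * (1 / ((i : ℝ) * 2 ^ n))) := by
              have h4 : ((4:ℝ))^n = 2^n * 2^n := by rw [← mul_pow]; norm_num
              have hcc : (1/((i:ℝ)*2^n)) * (1/((i:ℝ)*2^n))
                  = 1/(i:ℝ)^2 * (1/(4:ℝ)^n) := by
                rw [div_mul_div_comm, div_mul_div_comm, one_mul]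
                congr 1
                rw [h4]; ring
              rw [hcc]; ring
          _ ≤ j i ((k : ℝ) / ((i : ℝ) * 2 ^ n)) (1 - (l : ℝ) / ((i : ℝ) * 2 ^ n))
              * ((1 / ((i : ℝ) * 2 ^ n)) * (1 / ((i : ℝ) * 2 ^ n))) := this
          _ = _ := by ring
      · filter_upwards [eventually_gt_atTop 2] with i hi
        obtain ⟨_, hup⟩ := hbound i hi k hk l hl
        have hipos : (0:ℝ) < i := by exact_mod_cast (by omega : 0 < i)
        have hc : (0:ℝ) ≤ (1 / ((i : ℝ) * 2 ^ n)) * (1 / ((i : ℝ) * 2 ^ n)) := by positivity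
        have := mul_le_mul_of_nonneg_right hup hc
        calc j i ((k : ℝ) / ((i : ℝ) * 2 ^ n)) (1 - (l : ℝ) / ((i : ℝ) * 2 ^ n))
              * (1 / ((i : ℝ) * 2 ^ n)) * (1 / ((i : ℝ) * 2 ^ n))
            = j i ((k : ℝ) / ((i : ℝ) * 2 ^ n)) (1 - (l : ℝ) / ((i : ℝ) * 2 ^ n))
              * ((1 / ((i : ℝ) * 2 ^ n)) * (1 / ((i : ℝ) * 2 ^ n))) := by ring
          _ ≤ Lam i * ((1 - (l : ℝ) / ((i : ℝ) * 2 ^ n)) - (k : ℝ) / ((i : ℝ) * 2 ^ n)) ^ (-(1 + 2 * s))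
              * ((1 / ((i : ℝ) * 2 ^ n)) * (1 / ((i : ℝ) * 2 ^ n))) := this
          _ = Lam i / (i:ℝ)^2
              * ((1 - (l : ℝ) / ((i : ℝ) * 2 ^ n)) - (k : ℝ) / ((i : ℝ) * 2 ^ n)) ^ (-(1 + 2 * s))
              * ((1:ℝ)/(4:ℝ)^n) := by
              have h4 : ((4:ℝ))^n = 2^n * 2^n := by rw [← mul_pow]; norm_num
              have hcc : (1/((i:ℝ)*2^n)) * (1/((i:ℝ)*2^n))
                  = 1/(i:ℝ)^2 * (1/(4:ℝ)^n) := by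
                rw [div_mul_div_comm, div_mul_div_comm, one_mul]
                congr 1
                rw [h4]; ring
              rw [hcc]; ring
    have := hA.mul hg
    refine this.congr ?_
    intro i
    ring
  have hsum : Tendsto (fun i : ℕ =>
      ∑ k ∈ Finset.range (2 ^ n), ∑ l ∈ Finset.range (2 ^ n),
        (u ((k : ℝ) / ((i : ℝ) * 2 ^ n)) - u (1 - (l : ℝ) / ((i : ℝ) * 2 ^ n))) ^ 2
          * j i ((k : ℝ) / ((i : ℝ) * 2 ^ n)) (1 - (l : ℝ) / ((i : ℝ) * 2 ^ n))
          * (1 / ((i : ℝ) * 2 ^ n)) * (1 / ((i : ℝ) * 2 ^ n)))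
      atTop (nhds (∑ k ∈ Finset.range (2 ^ n), ∑ l ∈ Finset.range (2 ^ n),
        (u 0 - u 1)^2 * (1/(4:ℝ)^n))) := by
    refine tendsto_finset_sum _ fun k hk => ?_
    exact tendsto_finset_sum _ fun l hl => key k hk l hl
  have hval : (∑ k ∈ Finset.range (2 ^ n), ∑ l ∈ Finset.range (2 ^ n),
      (u 0 - u 1)^2 * (1/(4:ℝ)^n)) = (u 0 - u 1)^2 := by
    have h4 : ((4:ℝ))^n = 2^n * 2^n := by rw [← mul_pow]; norm_num
    simp only [Finset.sum_const, Finset.card_range, nsmul_eq_mul]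
    push_cast
    rw [h4]
    have h2 : ((2:ℝ))^n ≠ 0 := by positivity
    field_simp
  rw [hval] at hsum
  simpa using hsum.const_mul (2:ℝ)
end

section
/- Let i_0 ∈ ℕ and suppose the limiting nonlocal energies satisfy, for each i ≥ i_0, 2λ_i ∫_0^{1/i} ∫_{1-1/i}^1 (u(x)-u(y))^2 (y-x)^{-1-2s} dy dx ≤ E_i^(∞)(u) ≤ 2Λ_i ∫_0^{1/i} ∫_{1-1/i}^1 (u(x)-u(y))^2 (y-x)^{-1-2s} dy dx, where λ_i/i^2 → 1 and Λ_i/i^2 → 1. If u ∈ L^2 is continuous at 0 and 1 (or more generally if 0 and 1 are Lebesgue points of u and u^2), then lim_{i→∞} E_i^(∞)(u|_{[0,1/i] ∪ [1-1/i,1]}) = 2(u(0) - u(1))^2. -/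
open MeasureTheory

theorem stmt17 (s : ℝ) (hs : 0 < s) (hs1 : s < 1) (i0 : ℕ)
    (u : ℝ → ℝ)
    (hu : MemLp u 2 (volume.restrict (Set.Icc (0 : ℝ) 1)))
    (hu0 : ContinuousWithinAt u (Set.Icc (0 : ℝ) 1) 0)
    (hu1 : ContinuousWithinAt u (Set.Icc (0 : ℝ) 1) 1)
    (E lam Lam : ℕ → ℝ)
    (hE : ∀ i : ℕ, i0 ≤ i →
      2 * lam i * (∫ x in (0 : ℝ)..(1 / (i : ℝ)), ∫ y in (1 - 1 / (i : ℝ))..(1 : ℝ),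
          (u x - u y) ^ 2 * (y - x) ^ (-(1 + 2 * s))) ≤ E i ∧
      E i ≤ 2 * Lam i * (∫ x in (0 : ℝ)..(1 / (i : ℝ)), ∫ y in (1 - 1 / (i : ℝ))..(1 : ℝ),
          (u x - u y) ^ 2 * (y - x) ^ (-(1 + 2 * s))))
    (hlam : Filter.Tendsto (fun i : ℕ => lam i / (i : ℝ) ^ 2) Filter.atTop (nhds 1))
    (hLam : Filter.Tendsto (fun i : ℕ => Lam i / (i : ℝ) ^ 2) Filter.atTop (nhds 1)) :
    Filter.Tendsto E Filter.atTop (nhds (2 * (u 0 - u 1) ^ 2)) := by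
  set c : ℝ := -(1 + 2 * s) with hc
  set L : ℝ := (u 0 - u 1) ^ 2 with hLdef
  set g : ℝ → ℝ → ℝ := fun x y => (u x - u y) ^ 2 * (y - x) ^ c with hgdef
  set I : ℕ → ℝ := fun i => ∫ x in (0 : ℝ)..(1 / (i : ℝ)),
      ∫ y in (1 - 1 / (i : ℝ))..(1 : ℝ), g x y with hIdef
  -- continuity of the integrand at (0,1)
  have hG : ContinuousWithinAt (fun p : ℝ × ℝ => (u p.1 - u p.2) ^ 2 * (p.2 - p.1) ^ c)
      (Set.Icc (0:ℝ) 1 ×ˢ Set.Icc (0:ℝ) 1) (0, 1) := by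
    have h1 : ContinuousWithinAt (u ∘ Prod.fst)
        (Set.Icc (0:ℝ) 1 ×ˢ Set.Icc (0:ℝ) 1) ((0:ℝ), (1:ℝ)) :=
      ContinuousWithinAt.comp hu0 continuousWithinAt_fst (fun p hp => hp.1)
    have h2 : ContinuousWithinAt (u ∘ Prod.snd)
        (Set.Icc (0:ℝ) 1 ×ˢ Set.Icc (0:ℝ) 1) ((0:ℝ), (1:ℝ)) :=
      ContinuousWithinAt.comp hu1 continuousWithinAt_snd (fun p hp => hp.2)
    have h3 : ContinuousWithinAt ((fun t : ℝ => t ^ c) ∘ (fun p : ℝ × ℝ => p.2 - p.1))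
        (Set.Icc (0:ℝ) 1 ×ˢ Set.Icc (0:ℝ) 1) ((0:ℝ), (1:ℝ)) := by
      have hcont : ContinuousAt (fun t : ℝ => t ^ c) ((1:ℝ) - 0) :=
        Real.continuousAt_rpow_const _ _ (Or.inl (by norm_num))
      exact (ContinuousAt.comp (f := fun p : ℝ × ℝ => p.2 - p.1) (x := ((0:ℝ), (1:ℝ)))
        hcont ((continuous_snd.sub continuous_fst).continuousAt)).continuousWithinAt
    exact ((h1.sub h2).pow 2).mul h3
  have key : Filter.Tendsto (fun i : ℕ => (i:ℝ) ^ 2 * I i) Filter.atTop (nhds L) := by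
    rw [Metric.tendsto_atTop]
    intro ε hε
    obtain ⟨δ, hδpos, hδ⟩ := Metric.continuousWithinAt_iff.mp hG (ε / 2) (by positivity)
    obtain ⟨N, hN⟩ := exists_nat_gt (max 2 (2 / δ))
    refine ⟨N, fun i hi => ?_⟩
    have hNi : (N:ℝ) ≤ (i:ℝ) := Nat.cast_le.mpr hi
    have hi2 : (2:ℝ) < (i:ℝ) := lt_of_le_of_lt (le_max_left _ _) (lt_of_lt_of_le hN hNi)
    have hipos : (0:ℝ) < (i:ℝ) := by linarith
    have hinv_pos : (0:ℝ) < 1 / (i:ℝ) := by positivity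
    have hinv_half : 1 / (i:ℝ) < 1 / 2 := by
      rw [div_lt_div_iff₀ hipos (by norm_num)]; linarith
    have hinv_δ : 1 / (i:ℝ) < δ := by
      have h2δ : 2 / δ < (i:ℝ) := lt_of_le_of_lt (le_max_right _ _) (lt_of_lt_of_le hN hNi)
      have h2' : 2 < (i:ℝ) * δ := (div_lt_iff₀ hδpos).mp h2δ
      rw [div_lt_iff₀ hipos]; nlinarith
    set n : ℝ := (i:ℝ) with hndef
    -- pointwise bound on the box
    have hbox : ∀ x ∈ Set.Icc (0:ℝ) (1/n), ∀ y ∈ Set.Icc (1 - 1/n) (1:ℝ),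
        |g x y - L| ≤ ε / 2 := by
      intro x hx y hy
      have hx01 : x ∈ Set.Icc (0:ℝ) 1 := ⟨hx.1, by linarith [hx.2]⟩
      have hy01 : y ∈ Set.Icc (0:ℝ) 1 := ⟨by linarith [hy.1], hy.2⟩
      have hdist : dist ((x, y) : ℝ × ℝ) (0, 1) < δ := by
        rw [Prod.dist_eq]
        simp only [Real.dist_eq]
        apply max_lt
        · rw [abs_of_nonneg (by simpa using hx.1)]; simpa using lt_of_le_of_lt hx.2 hinv_δ
        · rw [abs_of_nonpos (by linarith [hy.2])]; linarith [hy.1]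
      have := hδ (x := (x, y)) ⟨hx01, hy01⟩ hdist
      have hval : (u (0:ℝ) - u 1) ^ 2 * ((1:ℝ) - 0) ^ c = L := by
        simp [Real.one_rpow, hLdef]
      rw [Real.dist_eq] at this
      simp only [hval] at this
      exact le_of_lt this
    -- measures
    have hab : (1:ℝ) - 1/n ≤ 1 := by linarith
    have h0n : (0:ℝ) ≤ 1/n := le_of_lt hinv_pos
    have huI : AEStronglyMeasurable u (volume.restrict (Set.Ioc (0:ℝ) (1/n))) :=
      hu.aestronglyMeasurable.mono_set (Set.Ioc_subset_Icc_self.trans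
        (Set.Icc_subset_Icc le_rfl (by linarith)))
    have huJ : AEStronglyMeasurable u (volume.restrict (Set.Ioc (1 - 1/n) (1:ℝ))) :=
      hu.aestronglyMeasurable.mono_set (Set.Ioc_subset_Icc_self.trans
        (Set.Icc_subset_Icc (by linarith) le_rfl))
    -- inner integrability
    have hginteg : ∀ x ∈ Set.Icc (0:ℝ) (1/n),
        IntervalIntegrable (fun y => g x y) volume (1 - 1/n) 1 := by
      intro x hx
      rw [intervalIntegrable_iff_integrableOn_Ioc_of_le hab]
      apply Integrable.mono' (integrable_const (|L| + ε / 2))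
      · have hcont : ContinuousOn (fun y : ℝ => (y - x) ^ c) (Set.Ioc (1 - 1/n) (1:ℝ)) := by
          intro y hy
          have hpos : 0 < y - x := by
            have := hx.2
            have := hy.1
            linarith
          exact (ContinuousAt.comp (f := fun y : ℝ => y - x) (x := y)
            (Real.continuousAt_rpow_const _ _ (Or.inl (ne_of_gt hpos)))
            ((continuous_id.sub continuous_const).continuousAt)).continuousWithinAt
        exact ((aestronglyMeasurable_const.sub huJ).pow 2).mul
          (hcont.aestronglyMeasurable measurableSet_Ioc)
      · filter_upwards [ae_restrict_mem measurableSet_Ioc] with y hy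
        have := hbox x hx y (Set.Ioc_subset_Icc_self hy)
        have habs : |g x y| - |L| ≤ |g x y - L| := abs_sub_abs_le_abs_sub _ _
        show |g x y| ≤ |L| + ε / 2
        linarith
    -- inner bound
    have hFb : ∀ x ∈ Set.Icc (0:ℝ) (1/n),
        |(∫ y in (1 - 1/n)..(1:ℝ), g x y) - L * (1/n)| ≤ ε / 2 * (1/n) := by
      intro x hx
      have hsplit : (∫ y in (1 - 1/n)..(1:ℝ), g x y) - L * (1/n)
          = ∫ y in (1 - 1/n)..(1:ℝ), (g x y - L) := by
        rw [intervalIntegral.integral_sub (hginteg x hx) intervalIntegrable_const,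
          intervalIntegral.integral_const]
        rw [smul_eq_mul]; ring
      rw [hsplit]
      have := intervalIntegral.norm_integral_le_of_norm_le_const
        (f := fun y => g x y - L) (a := 1 - 1/n) (b := 1) (C := ε / 2) ?_
      · calc |∫ y in (1 - 1/n)..(1:ℝ), (g x y - L)| ≤ ε / 2 * |1 - (1 - 1/n)| := this
          _ = ε / 2 * (1/n) := by rw [show (1:ℝ) - (1 - 1/n) = 1/n by ring,
              abs_of_nonneg h0n]
      · intro y hy
        rw [Set.uIoc_of_le hab] at hy
        exact hbox x hx y (Set.Ioc_subset_Icc_self hy)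
    -- outer integrand measurable
    set F : ℝ → ℝ := fun x => ∫ y in (1 - 1/n)..(1:ℝ), g x y with hFdef
    have hFmeas : AEStronglyMeasurable F (volume.restrict (Set.Ioc (0:ℝ) (1/n))) := by
      have hjoint : AEStronglyMeasurable (fun p : ℝ × ℝ => g p.1 p.2)
          ((volume.restrict (Set.Ioc (0:ℝ) (1/n))).prod
            (volume.restrict (Set.Ioc (1 - 1/n) (1:ℝ)))) := by
        have hrp : AEStronglyMeasurable (fun p : ℝ × ℝ => (p.2 - p.1) ^ c)
            ((volume.restrict (Set.Ioc (0:ℝ) (1/n))).prod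
              (volume.restrict (Set.Ioc (1 - 1/n) (1:ℝ)))) := by
          rw [Measure.prod_restrict, ← Measure.volume_eq_prod]
          have hcont : ContinuousOn (fun p : ℝ × ℝ => (p.2 - p.1) ^ c)
              (Set.Ioc (0:ℝ) (1/n) ×ˢ Set.Ioc (1 - 1/n) (1:ℝ)) := by
            intro p hp
            have hpos : 0 < p.2 - p.1 := by
              have h1 := hp.1.2
              have h2 := hp.2.1
              linarith
            exact (ContinuousAt.comp (f := fun p : ℝ × ℝ => p.2 - p.1) (x := p)
              (Real.continuousAt_rpow_const _ _ (Or.inl (ne_of_gt hpos)))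
              ((continuous_snd.sub continuous_fst).continuousAt)).continuousWithinAt
          exact hcont.aestronglyMeasurable (measurableSet_Ioc.prod measurableSet_Ioc)
        exact ((huI.comp_fst.sub huJ.comp_snd).pow 2).mul hrp
      have h2 := hjoint.integral_prod_right'
      refine h2.congr (Filter.Eventually.of_forall fun x => ?_)
      show _ = F x
      simp only [hFdef]
      rw [intervalIntegral.integral_of_le hab]
    -- outer integrability
    have hFint : IntervalIntegrable F volume 0 (1/n) := by
      rw [intervalIntegrable_iff_integrableOn_Ioc_of_le h0n]
      apply Integrable.mono' (integrable_const ((|L| + ε / 2) * (1/n)))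
      · exact hFmeas
      · filter_upwards [ae_restrict_mem measurableSet_Ioc] with x hx
        have h1 := hFb x (Set.Ioc_subset_Icc_self hx)
        have habs : |F x| - |L * (1/n)| ≤ |F x - L * (1/n)| := abs_sub_abs_le_abs_sub _ _
        have habs2 : |L * (1/n)| = |L| * (1/n) := by rw [abs_mul, abs_of_nonneg h0n]
        show |F x| ≤ (|L| + ε / 2) * (1/n)
        nlinarith
    -- outer bound
    have houter : |I i - L * (1/n) * (1/n)| ≤ ε / 2 * (1/n) * (1/n) := by
      have hsplit : I i - L * (1/n) * (1/n)
          = ∫ x in (0:ℝ)..(1/n), (F x - L * (1/n)) := by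
        rw [intervalIntegral.integral_sub hFint intervalIntegrable_const,
          intervalIntegral.integral_const, smul_eq_mul]
        simp only [hIdef, hFdef, hndef]
        ring
      rw [hsplit]
      have := intervalIntegral.norm_integral_le_of_norm_le_const
        (f := fun x => F x - L * (1/n)) (a := 0) (b := 1/n) (C := ε / 2 * (1/n)) ?_
      · calc |∫ x in (0:ℝ)..(1/n), (F x - L * (1/n))| ≤ ε / 2 * (1/n) * |1/n - 0| := this
          _ = ε / 2 * (1/n) * (1/n) := by rw [sub_zero, abs_of_nonneg h0n]
      · intro x hx
        rw [Set.uIoc_of_le h0n] at hx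
        exact hFb x (Set.Ioc_subset_Icc_self hx)
    -- conclude
    rw [Real.dist_eq]
    have hn2 : (0:ℝ) < n ^ 2 := by positivity
    have : |n ^ 2 * I i - L| = n ^ 2 * |I i - L * (1/n) * (1/n)| := by
      rw [← abs_of_pos hn2, ← abs_mul]
      congr 1
      rw [abs_of_pos hn2]
      field_simp
    rw [this]
    calc n ^ 2 * |I i - L * (1/n) * (1/n)| ≤ n ^ 2 * (ε / 2 * (1/n) * (1/n)) :=
          mul_le_mul_of_nonneg_left houter (le_of_lt hn2)
      _ = ε / 2 := by field_simp
      _ < ε := by linarith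
  -- squeeze
  have hlow : Filter.Tendsto (fun i : ℕ => 2 * lam i * I i) Filter.atTop (nhds (2 * L)) := by
    have h1 : Filter.Tendsto (fun i : ℕ => 2 * ((lam i / (i:ℝ) ^ 2) * ((i:ℝ) ^ 2 * I i)))
        Filter.atTop (nhds (2 * (1 * L))) :=
      (Filter.Tendsto.const_mul 2 (hlam.mul key))
    rw [one_mul] at h1
    apply h1.congr'
    filter_upwards [Filter.eventually_ge_atTop 1] with i hi
    have : ((i:ℝ)) ≠ 0 := Nat.cast_ne_zero.mpr (by omega)
    field_simp
  have hhigh : Filter.Tendsto (fun i : ℕ => 2 * Lam i * I i) Filter.atTop (nhds (2 * L)) := by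
    have h1 : Filter.Tendsto (fun i : ℕ => 2 * ((Lam i / (i:ℝ) ^ 2) * ((i:ℝ) ^ 2 * I i)))
        Filter.atTop (nhds (2 * (1 * L))) :=
      (Filter.Tendsto.const_mul 2 (hLam.mul key))
    rw [one_mul] at h1
    apply h1.congr'
    filter_upwards [Filter.eventually_ge_atTop 1] with i hi
    have : ((i:ℝ)) ≠ 0 := Nat.cast_ne_zero.mpr (by omega)
    field_simp
  refine tendsto_of_tendsto_of_tendsto_of_le_of_le' hlow hhigh ?_ ?_
  · filter_upwards [Filter.eventually_ge_atTop i0] with i hi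
    exact (hE i hi).1
  · filter_upwards [Filter.eventually_ge_atTop i0] with i hi
    exact (hE i hi).2
end
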